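/- arXiv:2003.06415 — 5 statements merged into one kernel-verified Lean document; each statement's English description precedes it below -/
import Mathlib

section
/- Let N ≥ 1 be an integer, let 0 < δ < ε < 1 and Γ ∈ (0,1] be reals with Γ ≥ sqrt(ln(1/δ) / ((ε−δ)² · N)). On a probability space, let A_1, …, A_N be mutually independent events and let B_1, …, B_N be events with P(B_i) ≥ Γ > 0 and P(A_i | B_i) ≥ 1−δ for every i (in particular P(A_i) ≥ (1−δ)Γ for every i). Then the probability that at least (1−ε)·Γ·N of the events A_1, …, A_N occur is at least 1−δ. -/
open Real

lemma aux_sinh_le (u : ℝ) (hu : 0 ≤ u) : Real.sinh u ≤ u * Real.cosh u := by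
  have hd : ∀ x : ℝ, HasDerivAt (fun x => x * Real.cosh x - Real.sinh x) (x * Real.sinh x) x := by
    intro x
    have h1 : HasDerivAt (fun x : ℝ => x * Real.cosh x) (1 * Real.cosh x + x * Real.sinh x) x :=
      (hasDerivAt_id x).mul (Real.hasDerivAt_cosh x)
    have h2 := h1.sub (Real.hasDerivAt_sinh x)
    convert h2 using 1
    all_goals try rfl
    ring
  have hdiff : Differentiable ℝ (fun x : ℝ => x * Real.cosh x - Real.sinh x) :=
    fun x => (hd x).differentiableAt
  have hmono : MonotoneOn (fun x : ℝ => x * Real.cosh x - Real.sinh x) (Set.Ici 0) := by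
    refine monotoneOn_of_deriv_nonneg (convex_Ici 0) hdiff.continuous.continuousOn
      hdiff.differentiableOn ?_
    intro x hx
    rw [(hd x).deriv]
    rw [interior_Ici] at hx
    exact mul_nonneg (le_of_lt hx)
      (by rw [← Real.sinh_zero]; exact Real.sinh_le_sinh.mpr hx.le)
  have := hmono (Set.self_mem_Ici) hu hu
  simp only [Real.sinh_zero, Real.cosh_zero, mul_one, zero_mul, sub_zero] at this
  linarith

lemma aux_exp_ineq (v : ℝ) (hv : 0 ≤ v) : Real.exp v - 1 ≤ v / 2 * (Real.exp v + 1) := by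
  have h := aux_sinh_le (v / 2) (by linarith)
  rw [Real.sinh_eq, Real.cosh_eq] at h
  have ha : Real.exp (v / 2) * Real.exp (-(v / 2)) = 1 := by
    rw [← Real.exp_add]; simp
  have hb : Real.exp (v / 2) * Real.exp (v / 2) = Real.exp v := by
    rw [← Real.exp_add]; ring_nf
  nlinarith [Real.exp_pos (v / 2), Real.exp_pos (-(v / 2))]

lemma bern_mgf_le (p : ℝ) (hp0 : 0 ≤ p) (hp1 : p ≤ 1) (t : ℝ) :
    1 - p + p * Real.exp t ≤ Real.exp (p * t + t ^ 2 / 8) := by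
  have hD : ∀ x : ℝ, 0 < 1 - p + p * Real.exp x := by
    intro x
    rcases le_or_gt (Real.exp x) 1 with h | h
    · nlinarith [Real.exp_pos x]
    · nlinarith [Real.exp_pos x]
  set g : ℝ → ℝ := fun x => p * x + x ^ 2 / 8 - Real.log (1 - p + p * Real.exp x) with hgdef
  have hd : ∀ x : ℝ, HasDerivAt g
      (p + x / 4 - p * Real.exp x / (1 - p + p * Real.exp x)) x := by
    intro x
    have h1 : HasDerivAt (fun x : ℝ => p * x) p x := by
      simpa using (hasDerivAt_id x).const_mul p
    have h2 : HasDerivAt (fun x : ℝ => x ^ 2 / 8) (x / 4) x := by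
      have := (hasDerivAt_pow 2 x).div_const 8
      convert this using 1
      all_goals try rfl
      simp; ring
    have h3 : HasDerivAt (fun x : ℝ => 1 - p + p * Real.exp x) (p * Real.exp x) x :=
      ((Real.hasDerivAt_exp x).const_mul p).const_add (1 - p)
    have h4 := h3.log (hD x).ne'
    exact (h1.add h2).sub h4
  have hdiff : Differentiable ℝ g := fun x => (hd x).differentiableAt
  have key : ∀ x : ℝ, 0 ≤ x →
      p * (1 - p) * (Real.exp x - 1) ≤ x / 4 * (1 - p + p * Real.exp x) := by
    intro x hx
    set s := Real.exp (x / 2) with hs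
    have hs1 : 1 ≤ s := Real.one_le_exp (by linarith)
    have hsq : s * s = Real.exp x := by
      rw [hs, ← Real.exp_add]; ring_nf
    have h1 : p * (1 - p) * (1 + s) ^ 2 ≤ 1 - p + p * Real.exp x := by
      rw [← hsq]; nlinarith [sq_nonneg (1 - p * (1 + s))]
    have h2 : s - 1 ≤ x / 4 * (s + 1) := by
      have := aux_exp_ineq (x / 2) (by linarith)
      rw [← hs] at this
      nlinarith
    have hq : 0 ≤ p * (1 - p) * (1 + s) :=
      mul_nonneg (mul_nonneg hp0 (by linarith)) (by linarith)
    calc p * (1 - p) * (Real.exp x - 1) = p * (1 - p) * (1 + s) * (s - 1) := by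
          rw [← hsq]; ring
      _ ≤ p * (1 - p) * (1 + s) * (x / 4 * (s + 1)) := mul_le_mul_of_nonneg_left h2 hq
      _ = x / 4 * (p * (1 - p) * (1 + s) ^ 2) := by ring
      _ ≤ x / 4 * (1 - p + p * Real.exp x) := mul_le_mul_of_nonneg_left h1 (by linarith)
  have key2 : ∀ x : ℝ, x ≤ 0 →
      x / 4 * (1 - p + p * Real.exp x) ≤ p * (1 - p) * (Real.exp x - 1) := by
    intro x hx
    set s := Real.exp (x / 2) with hs
    have hs0 : 0 < s := Real.exp_pos _
    have hs1 : s ≤ 1 := Real.exp_le_one_iff.mpr (by linarith)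
    have hsq : s * s = Real.exp x := by
      rw [hs, ← Real.exp_add]; ring_nf
    have h1 : p * (1 - p) * (1 + s) ^ 2 ≤ 1 - p + p * Real.exp x := by
      rw [← hsq]; nlinarith [sq_nonneg (1 - p * (1 + s))]
    have h2 : 1 - s ≤ -x / 4 * (1 + s) := by
      have h := aux_exp_ineq (-x / 2) (by linarith)
      have hrs : Real.exp (-x / 2) * s = 1 := by
        rw [hs, ← Real.exp_add]; ring_nf; exact Real.exp_zero
      nlinarith [Real.exp_pos (-x / 2)]
    have hq : 0 ≤ p * (1 - p) * (1 + s) :=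
      mul_nonneg (mul_nonneg hp0 (by linarith)) (by linarith)
    have : p * (1 - p) * (1 - Real.exp x) ≤ -x / 4 * (1 - p + p * Real.exp x) := by
      calc p * (1 - p) * (1 - Real.exp x) = p * (1 - p) * (1 + s) * (1 - s) := by
            rw [← hsq]; ring
        _ ≤ p * (1 - p) * (1 + s) * (-x / 4 * (1 + s)) := mul_le_mul_of_nonneg_left h2 hq
        _ = -x / 4 * (p * (1 - p) * (1 + s) ^ 2) := by ring
        _ ≤ -x / 4 * (1 - p + p * Real.exp x) := mul_le_mul_of_nonneg_left h1 (by linarith)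
    linarith
  have hg0 : g 0 = 0 := by
    simp [hgdef]
  have hmono : MonotoneOn g (Set.Ici 0) := by
    refine monotoneOn_of_deriv_nonneg (convex_Ici 0) hdiff.continuous.continuousOn
      hdiff.differentiableOn ?_
    intro x hx
    rw [interior_Ici] at hx
    rw [(hd x).deriv]
    rw [sub_nonneg, div_le_iff₀ (hD x)]
    nlinarith [key x hx.le]
  have hanti : AntitoneOn g (Set.Iic 0) := by
    refine antitoneOn_of_deriv_nonpos (convex_Iic 0) hdiff.continuous.continuousOn
      hdiff.differentiableOn ?_
    intro x hx
    rw [interior_Iic] at hx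
    rw [(hd x).deriv]
    rw [sub_nonpos, le_div_iff₀ (hD x)]
    nlinarith [key2 x hx.le]
  have hgt : 0 ≤ g t := by
    rcases le_total 0 t with h | h
    · have := hmono Set.self_mem_Ici h h
      rw [hg0] at this; exact this
    · have := hanti (Set.mem_Iic.mpr h) Set.self_mem_Iic h
      rw [hg0] at this; exact this
  have hlog : Real.log (1 - p + p * Real.exp t) ≤ p * t + t ^ 2 / 8 := by
    simp only [hgdef] at hgt; linarith
  calc 1 - p + p * Real.exp t = Real.exp (Real.log (1 - p + p * Real.exp t)) :=
        (Real.exp_log (hD t)).symm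
    _ ≤ Real.exp (p * t + t ^ 2 / 8) := Real.exp_le_exp.mpr hlog

open MeasureTheory ProbabilityTheory

/-- Hoeffding/collision-counting core of part P1 of the paper's Lemma 1. -/
theorem stmt_0 {Ω : Type*} [MeasurableSpace Ω] (μ : Measure Ω) [IsProbabilityMeasure μ]
    (N : ℕ) (hN : 1 ≤ N) (δ ε Γ : ℝ)
    (hδpos : 0 < δ) (hδε : δ < ε) (hε1 : ε < 1) (hΓpos : 0 < Γ) (hΓ1 : Γ ≤ 1)
    (hΓ : Γ ≥ Real.sqrt (Real.log (1 / δ) / ((ε - δ) ^ 2 * N)))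
    (A B : Fin N → Set Ω)
    (hAmeas : ∀ i, MeasurableSet (A i)) (hBmeas : ∀ i, MeasurableSet (B i))
    (hindep : iIndepSet A μ)
    (hPB : ∀ i, Γ ≤ (μ (B i)).toReal)
    (hcond : ∀ i, 1 - δ ≤ ((μ[|B i]) (A i)).toReal)
    (hPA : ∀ i, (1 - δ) * Γ ≤ (μ (A i)).toReal) :
    1 - δ ≤
      (μ {ω | (1 - ε) * Γ * N ≤ (Set.ncard {i : Fin N | ω ∈ A i} : ℝ)}).toReal := by
  classical
  have hδ1 : δ < 1 := hδε.trans hε1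
  set X : Fin N → Ω → ℝ := fun i => (A i).indicator (fun _ => 1) with hXdef
  have hXmeas : ∀ i, Measurable (X i) := fun i => measurable_const.indicator (hAmeas i)
  have hXindep : iIndepFun X μ := hindep.iIndepFun_indicator
  set p : Fin N → ℝ := fun i => (μ (A i)).toReal with hpdef
  have hp0 : ∀ i, 0 ≤ p i := fun i => ENNReal.toReal_nonneg
  have hp1 : ∀ i, p i ≤ 1 := by
    intro i
    have h1 : μ (A i) ≤ 1 := prob_le_one
    calc p i ≤ (1 : ENNReal).toReal := ENNReal.toReal_mono (by simp) h1
      _ = 1 := by simp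
  have hexpX : ∀ (t : ℝ) i (ω : Ω),
      Real.exp (t * X i ω) = (A i).indicator (fun _ => Real.exp t - 1) ω + 1 := by
    intro t i ω
    by_cases h : ω ∈ A i <;> simp [hXdef, h]
  have hint : ∀ (t : ℝ) i, Integrable (fun ω => Real.exp (t * X i ω)) μ := by
    intro t i
    simp only [hexpX t i]
    exact ((integrable_const _).indicator (hAmeas i)).add (integrable_const 1)
  have hmgf : ∀ (t : ℝ) i, mgf (X i) μ t = 1 - p i + p i * Real.exp t := by
    intro t i
    rw [mgf]
    calc ∫ ω, Real.exp (t * X i ω) ∂μ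
        = ∫ ω, ((A i).indicator (fun _ => Real.exp t - 1) ω + 1) ∂μ := by
          congr 1; funext ω; exact hexpX t i ω
      _ = (∫ ω, (A i).indicator (fun _ => Real.exp t - 1) ω ∂μ) + ∫ _ω, (1:ℝ) ∂μ :=
          integral_add ((integrable_const _).indicator (hAmeas i)) (integrable_const 1)
      _ = (μ (A i)).toReal • (Real.exp t - 1) + 1 := by
          rw [integral_indicator_const _ (hAmeas i)]; simp [measureReal_def]
      _ = 1 - p i + p i * Real.exp t := by
          simp only [hpdef, smul_eq_mul]; ring
  set S : Ω → ℝ := ∑ i, X i with hSdef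
  have hSapp : ∀ ω, S ω = ∑ i, X i ω := fun ω => Finset.sum_apply ω Finset.univ X
  have hSmeas : Measurable S := by
    have : S = fun ω => ∑ i, X i ω := funext hSapp
    rw [this]
    exact Finset.measurable_sum Finset.univ fun i _ => hXmeas i
  set t₀ : ℝ := -4 * (ε - δ) * Γ with ht₀def
  have ht₀ : t₀ ≤ 0 := by
    have : 0 < (ε - δ) * Γ := mul_pos (by linarith) hΓpos
    nlinarith
  set m : ℝ := ∑ i, p i with hmdef
  set a : ℝ := (1 - ε) * Γ * N with hadef
  have hintS : Integrable (fun ω => Real.exp (t₀ * S ω)) μ :=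
    hXindep.integrable_exp_mul_sum hXmeas fun i _ => hint t₀ i
  have hmgfS : mgf S μ t₀ ≤ Real.exp (t₀ * m + N * t₀ ^ 2 / 8) := by
    rw [hSdef, hXindep.mgf_sum hXmeas Finset.univ]
    have hDpos : ∀ i : Fin N, (0:ℝ) ≤ 1 - p i + p i * Real.exp t₀ := by
      intro i
      rcases le_or_gt (Real.exp t₀) 1 with h | h
      · nlinarith [Real.exp_pos t₀, hp0 i, hp1 i]
      · nlinarith [Real.exp_pos t₀, hp0 i, hp1 i]
    calc ∏ i, mgf (X i) μ t₀ = ∏ i, (1 - p i + p i * Real.exp t₀) := by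
          simp_rw [hmgf t₀]
      _ ≤ ∏ i, Real.exp (p i * t₀ + t₀ ^ 2 / 8) :=
          Finset.prod_le_prod (fun i _ => hDpos i)
            (fun i _ => bern_mgf_le (p i) (hp0 i) (hp1 i) t₀)
      _ = Real.exp (∑ i, (p i * t₀ + t₀ ^ 2 / 8)) := (Real.exp_sum _ _).symm
      _ = Real.exp (t₀ * m + N * t₀ ^ 2 / 8) := by
          rw [Finset.sum_add_distrib, ← Finset.sum_mul, Finset.sum_const, Finset.card_univ,
            Fintype.card_fin, hmdef]
          ring_nf
  -- the log bound
  have hLnonneg : 0 ≤ Real.log (1 / δ) := by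
    apply Real.log_nonneg
    rw [le_div_iff₀ hδpos]; linarith
  have hden : 0 < (ε - δ) ^ 2 * N := by
    have h1 : (0:ℝ) < N := by exact_mod_cast hN
    exact mul_pos (pow_pos (by linarith) 2) h1
  have hΓsq : Real.log (1 / δ) ≤ Γ ^ 2 * ((ε - δ) ^ 2 * N) := by
    have hx0 : 0 ≤ Real.log (1 / δ) / ((ε - δ) ^ 2 * N) := div_nonneg hLnonneg hden.le
    have h1 : Real.log (1 / δ) / ((ε - δ) ^ 2 * N) ≤ Γ ^ 2 := by
      calc Real.log (1 / δ) / ((ε - δ) ^ 2 * N)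
          = Real.sqrt (Real.log (1 / δ) / ((ε - δ) ^ 2 * N)) ^ 2 := (Real.sq_sqrt hx0).symm
        _ ≤ Γ ^ 2 := pow_le_pow_left₀ (Real.sqrt_nonneg _) hΓ 2
    exact (div_le_iff₀ hden).mp h1
  -- lower bound on the mean
  have hm : (N : ℝ) * ((1 - δ) * Γ) ≤ m := by
    rw [hmdef]
    calc (N : ℝ) * ((1 - δ) * Γ) = ∑ _i : Fin N, (1 - δ) * Γ := by
          rw [Finset.sum_const, Finset.card_univ, Fintype.card_fin, nsmul_eq_mul]
      _ ≤ ∑ i, p i := Finset.sum_le_sum fun i _ => hPA i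
  -- Chernoff bound
  have hcher : (μ {ω | S ω ≤ a}).toReal ≤ δ := by
    have h1 := measure_le_le_exp_mul_mgf (μ := μ) (X := S) a ht₀ hintS
    have h2 : Real.exp (-t₀ * a) * mgf S μ t₀ ≤ Real.exp (-t₀ * a + (t₀ * m + N * t₀ ^ 2 / 8)) := by
      rw [Real.exp_add]
      exact mul_le_mul_of_nonneg_left hmgfS (Real.exp_pos _).le
    have h3 : -t₀ * a + (t₀ * m + N * t₀ ^ 2 / 8) ≤ -(2 * Real.log (1 / δ)) := by
      have hma : (ε - δ) * Γ * N ≤ m - a := by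
        rw [hadef]
        linarith [hm]
      have h4 : t₀ * (m - a) ≤ t₀ * ((ε - δ) * Γ * N) := mul_le_mul_of_nonpos_left hma ht₀
      have h5 : t₀ * ((ε - δ) * Γ * N) + N * t₀ ^ 2 / 8 = -(2 * (Γ ^ 2 * ((ε - δ) ^ 2 * N))) := by
        rw [ht₀def]; ring
      linarith [hΓsq, h4, h5]
    have h6 : Real.exp (-(2 * Real.log (1 / δ))) = δ ^ 2 := by
      rw [show -(2 * Real.log (1 / δ)) = -Real.log (1 / δ) + -Real.log (1 / δ) by ring,
        Real.exp_add, Real.exp_neg, Real.exp_log (by positivity : (0:ℝ) < 1 / δ)]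
      field_simp
    have h7 : δ ^ 2 ≤ δ := by nlinarith
    calc (μ {ω | S ω ≤ a}).toReal ≤ Real.exp (-t₀ * a) * mgf S μ t₀ := h1
      _ ≤ Real.exp (-t₀ * a + (t₀ * m + N * t₀ ^ 2 / 8)) := h2
      _ ≤ Real.exp (-(2 * Real.log (1 / δ))) := Real.exp_le_exp.mpr h3
      _ = δ ^ 2 := h6
      _ ≤ δ := h7
  -- counting
  have hcount : ∀ ω, (Set.ncard {i : Fin N | ω ∈ A i} : ℝ) = S ω := by
    intro ω
    have h1 : {i : Fin N | ω ∈ A i}.ncard = (Finset.univ.filter fun i => ω ∈ A i).card := by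
      rw [Set.ncard_eq_toFinset_card']
      congr 1
      ext i
      simp
    rw [h1, hSapp]
    rw [← Finset.sum_boole]
    exact Finset.sum_congr rfl fun i _ => by
      by_cases h : ω ∈ A i <;> simp [hXdef, h]
  have hEeq : {ω | (1 - ε) * Γ * N ≤ (Set.ncard {i : Fin N | ω ∈ A i} : ℝ)}
      = {ω | a ≤ S ω} := by
    ext ω
    simp only [Set.mem_setOf_eq, hcount ω, hadef]
  rw [hEeq]
  have hE : MeasurableSet {ω | a ≤ S ω} := measurableSet_le measurable_const hSmeas
  have hcompl : {ω | a ≤ S ω}ᶜ ⊆ {ω | S ω ≤ a} := by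
    intro ω h
    simp only [Set.mem_compl_iff, Set.mem_setOf_eq, not_le] at h
    exact le_of_lt h
  have h8 : (μ {ω | a ≤ S ω}ᶜ).toReal ≤ δ :=
    le_trans (ENNReal.toReal_mono (measure_ne_top μ _) (measure_mono hcompl)) hcher
  have h9 : (μ {ω | a ≤ S ω}).toReal + (μ {ω | a ≤ S ω}ᶜ).toReal = 1 := by
    have := measure_add_measure_compl (μ := μ) hE
    rw [measure_univ] at this
    have := congrArg ENNReal.toReal this
    rwa [ENNReal.toReal_add (measure_ne_top μ _) (measure_ne_top μ _), ENNReal.toReal_one] at this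
  linarith
end

section
/- Let S ≥ 1 and M ≥ 1 be integers and let β, Γ ∈ (0,1] be reals with Γ ≥ sqrt(2·ln(2/β) / (β² · M)). For each j = 1, …, S let N_j ≥ M be an integer and let A^j_1, …, A^j_{N_j} be mutually independent events with P(A^j_i) ≤ Γ + β/2 − βΓ/2 for all i, and let F_j be the event that at least (Γ + β/2)·N_j of the events A^j_1, …, A^j_{N_j} occur. Then the probability that at most β·S of the events F_1, …, F_S occur is at least 1 − (1/β)·exp(−β²Γ²M/2), which is at least 1/2. -/
open MeasureTheory ProbabilityTheory

lemma bern_den_pos {p : ℝ} (hp0 : 0 ≤ p) (hp1 : p ≤ 1) (u : ℝ) :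
    0 < 1 - p + p * Real.exp u := by
  rcases eq_or_lt_of_le hp1 with h | h
  · subst h; simpa using Real.exp_pos u
  · have : 0 ≤ p * Real.exp u := mul_nonneg hp0 (Real.exp_pos u).le
    linarith

lemma bern_hoeffding {p t : ℝ} (hp0 : 0 ≤ p) (hp1 : p ≤ 1) (ht : 0 ≤ t) :
    1 - p + p * Real.exp t ≤ Real.exp (t * p + t ^ 2 / 8) := by
  set den : ℝ → ℝ := fun u => 1 - p + p * Real.exp u with hden_def
  have hden : ∀ u, 0 < den u := bern_den_pos hp0 hp1
  set g' : ℝ → ℝ := fun u => p + u / 4 - p * Real.exp u / den u with hg'_def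
  set g : ℝ → ℝ := fun u => u * p + u ^ 2 / 8 - Real.log (den u) with hg_def
  have hden' : ∀ u, HasDerivAt den (p * Real.exp u) u := fun u =>
    ((Real.hasDerivAt_exp u).const_mul p).const_add (1 - p)
  have hg'd : ∀ u, HasDerivAt g' (1 / 4 - p * Real.exp u * (1 - p) / (den u) ^ 2) u := by
    intro u
    have h1 : HasDerivAt (fun u : ℝ => p + u / 4) (1 / 4) u := by
      simpa using ((hasDerivAt_id u).div_const 4).const_add p
    have h2 : HasDerivAt (fun u => p * Real.exp u / den u)
        ((p * Real.exp u * den u - p * Real.exp u * (p * Real.exp u)) / (den u) ^ 2) u :=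
      ((Real.hasDerivAt_exp u).const_mul p).div (hden' u) (hden u).ne'
    have heq : (p * Real.exp u * den u - p * Real.exp u * (p * Real.exp u)) / (den u) ^ 2
        = p * Real.exp u * (1 - p) / (den u) ^ 2 := by
      rw [hden_def]; ring_nf
    rw [heq] at h2
    exact h1.sub h2
  have hg'mono : Monotone g' := by
    apply monotone_of_hasDerivAt_nonneg hg'd
    intro u
    have h4 : 4 * (p * Real.exp u * (1 - p)) ≤ (den u) ^ 2 := by
      have hd : den u = 1 - p + p * Real.exp u := rfl
      rw [hd]
      nlinarith [sq_nonneg ((1 - p) - p * Real.exp u)]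
    have hd2 : 0 < (den u) ^ 2 := pow_pos (hden u) 2
    have : p * Real.exp u * (1 - p) / (den u) ^ 2 ≤ 1 / 4 := by
      rw [div_le_div_iff₀ hd2 (by norm_num)]
      linarith
    simp only [Pi.zero_apply]
    linarith
  have hg'0 : g' 0 = 0 := by
    simp only [hg'_def, hden_def, Real.exp_zero, mul_one]
    field_simp
    ring
  have hgd : ∀ u, HasDerivAt g (g' u) u := by
    intro u
    have h1 : HasDerivAt (fun u : ℝ => u * p + u ^ 2 / 8) (p + u / 4) u := by
      have h2 : HasDerivAt (fun u : ℝ => u * p) p u := by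
        simpa using (hasDerivAt_id u).mul_const p
      have h3 : HasDerivAt (fun u : ℝ => u ^ 2 / 8) (u / 4) u := by
        have := (hasDerivAt_pow 2 u).div_const 8
        simpa [pow_one] using this.congr_deriv (by ring)
      exact h2.add h3
    have h2 : HasDerivAt (fun u => Real.log (den u)) (p * Real.exp u / den u) u :=
      (hden' u).log (hden u).ne'
    exact h1.sub h2
  have hgmono : MonotoneOn g (Set.Ici 0) := by
    apply monotoneOn_of_hasDerivWithinAt_nonneg (convex_Ici 0)
      (fun u _ => (hgd u).continuousAt.continuousWithinAt)
      (fun u _ => (hgd u).hasDerivWithinAt)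
    intro u hu
    rw [interior_Ici] at hu
    have := hg'mono (le_of_lt hu)
    rw [hg'0] at this
    exact this
  have hg0 : g 0 = 0 := by simp [hg_def, hden_def]
  have hgt : 0 ≤ g t := by
    have := hgmono (Set.self_mem_Ici) (Set.mem_Ici.2 ht) ht
    rw [hg0] at this; exact this
  have hlog : Real.log (den t) ≤ t * p + t ^ 2 / 8 := by
    simp only [hg_def] at hgt; linarith
  calc den t = Real.exp (Real.log (den t)) := (Real.exp_log (hden t)).symm
    _ ≤ Real.exp (t * p + t ^ 2 / 8) := Real.exp_le_exp.2 hlog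

lemma ncard_mem_eq_sum {Ω : Type*} {n : ℕ} (B : Fin n → Set Ω) (ω : Ω) :
    ((Set.ncard {i : Fin n | ω ∈ B i} : ℝ)) =
      ∑ i, (B i).indicator (fun _ => (1 : ℝ)) ω := by
  classical
  have h1 : {i : Fin n | ω ∈ B i} = ↑(Finset.univ.filter fun i => ω ∈ B i) := by
    ext i; simp
  rw [h1, Set.ncard_coe_finset, Finset.card_filter]
  push_cast
  refine Finset.sum_congr rfl fun i _ => ?_
  by_cases h : ω ∈ B i <;> simp [Set.indicator_apply, h]

lemma chernoff_count {Ω : Type*} [MeasurableSpace Ω] (μ : Measure Ω) [IsProbabilityMeasure μ]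
    (n : ℕ) (B : Fin n → Set Ω) (hB : ∀ i, MeasurableSet (B i))
    (hind : iIndepSet B μ) (p ε : ℝ) (hε : 0 < ε)
    (hPB : ∀ i, (μ (B i)).toReal ≤ p) :
    (μ {ω | (p + ε) * n ≤ (Set.ncard {i : Fin n | ω ∈ B i} : ℝ)}).toReal ≤
      Real.exp (-2 * ε ^ 2 * n) := by
  classical
  set X : Fin n → Ω → ℝ := fun i => (B i).indicator (fun _ => 1) with hX_def
  have hXmeas : ∀ i, Measurable (X i) := fun i => measurable_const.indicator (hB i)
  have hXind : iIndepFun X μ := hind.iIndepFun_indicator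
  set t : ℝ := 4 * ε with ht_def
  have ht : 0 ≤ t := by positivity
  have hcount : ∀ ω, ((Set.ncard {i : Fin n | ω ∈ B i} : ℝ)) = (∑ i, X i) ω := by
    intro ω
    rw [Finset.sum_apply]
    exact ncard_mem_eq_sum B ω
  have hexpX : ∀ i, (fun ω => Real.exp (t * X i ω)) =
      fun ω => 1 + (Real.exp t - 1) * X i ω := by
    intro i; funext ω
    by_cases h : ω ∈ B i
    · simp [hX_def, Set.indicator_apply, h]
    · simp [hX_def, Set.indicator_apply, h]
  have hint : ∀ i, Integrable (fun ω => Real.exp (t * X i ω)) μ := by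
    intro i
    rw [hexpX i]
    exact (integrable_const 1).add (((integrable_const (1:ℝ)).indicator (hB i)).const_mul _)
  have hmgf : ∀ i, mgf (X i) μ t ≤ Real.exp (t * p + t ^ 2 / 8) := by
    intro i
    set q := (μ (B i)).toReal with hq_def
    have hq0 : 0 ≤ q := ENNReal.toReal_nonneg
    have hq1 : q ≤ 1 := by
      rw [hq_def]
      calc (μ (B i)).toReal ≤ (μ Set.univ).toReal :=
            ENNReal.toReal_mono (measure_ne_top μ _) (measure_mono (Set.subset_univ _))
        _ = 1 := by simp
    have hmgf_eq : mgf (X i) μ t = 1 - q + q * Real.exp t := by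
      rw [mgf, hexpX i]
      rw [integral_add (integrable_const 1)
        (((integrable_const (1:ℝ)).indicator (hB i)).const_mul _)]
      rw [integral_const, integral_const_mul]
      have : ∫ ω, X i ω ∂μ = q := by
        rw [hX_def]
        simp only []
        rw [integral_indicator_const (1:ℝ) (hB i)]
        simp [hq_def]
        rfl
      rw [this]
      simp
      ring
    rw [hmgf_eq]
    calc 1 - q + q * Real.exp t ≤ Real.exp (t * q + t ^ 2 / 8) :=
          bern_hoeffding hq0 hq1 ht
      _ ≤ Real.exp (t * p + t ^ 2 / 8) := by
          apply Real.exp_le_exp.2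
          have : t * q ≤ t * p := mul_le_mul_of_nonneg_left (hPB i) ht
          linarith
  have hYint : Integrable (fun ω => Real.exp (t * (∑ i ∈ Finset.univ, X i) ω)) μ :=
    hXind.integrable_exp_mul_sum hXmeas (fun i _ => hint i)
  have hcher := measure_ge_le_exp_mul_mgf (X := ∑ i ∈ Finset.univ, X i)
    (μ := μ) ((p + ε) * n) ht hYint
  have hseteq : {ω | (p + ε) * ↑n ≤ (Set.ncard {i : Fin n | ω ∈ B i} : ℝ)} =
      {ω | (p + ε) * ↑n ≤ (∑ i ∈ Finset.univ, X i) ω} := by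
    ext ω; simp only [Set.mem_setOf_eq, hcount ω]
  rw [hseteq]
  refine hcher.trans ?_
  have hprod : mgf (∑ i ∈ Finset.univ, X i) μ t ≤ Real.exp ((t * p + t ^ 2 / 8) * n) := by
    rw [hXind.mgf_sum hXmeas]
    calc ∏ i : Fin n, mgf (X i) μ t ≤ ∏ _i : Fin n, Real.exp (t * p + t ^ 2 / 8) :=
          Finset.prod_le_prod (fun i _ => mgf_nonneg) (fun i _ => hmgf i)
      _ = Real.exp ((t * p + t ^ 2 / 8) * n) := by
          rw [Finset.prod_const, ← Real.exp_nat_mul]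
          simp [mul_comm]
  calc Real.exp (-t * ((p + ε) * n)) * mgf (∑ i ∈ Finset.univ, X i) μ t
      ≤ Real.exp (-t * ((p + ε) * n)) * Real.exp ((t * p + t ^ 2 / 8) * n) := by
        exact mul_le_mul_of_nonneg_left hprod (Real.exp_pos _).le
    _ = Real.exp (-2 * ε ^ 2 * n) := by
        rw [← Real.exp_add]
        congr 1
        rw [ht_def]; ring

/-- Combined probabilistic content of part P2 of the paper's Lemma 1. -/
theorem stmt_4 {Ω : Type*} [MeasurableSpace Ω] (μ : Measure Ω) [IsProbabilityMeasure μ]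
    (S M : ℕ) (hS : 1 ≤ S) (hM : 1 ≤ M) (β Γ : ℝ)
    (hβpos : 0 < β) (hβ1 : β ≤ 1) (hΓpos : 0 < Γ) (hΓ1 : Γ ≤ 1)
    (hΓ : Γ ≥ Real.sqrt (2 * Real.log (2 / β) / (β ^ 2 * M)))
    (N : Fin S → ℕ) (hN : ∀ j, M ≤ N j)
    (A : (j : Fin S) → Fin (N j) → Set Ω)
    (hAmeas : ∀ j i, MeasurableSet (A j i))
    (hindep : ∀ j, iIndepSet (A j) μ)
    (hPA : ∀ j i, (μ (A j i)).toReal ≤ Γ + β / 2 - β * Γ / 2)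
    (F : Fin S → Set Ω)
    (hF : ∀ j, F j =
      {ω | (Γ + β / 2) * (N j : ℝ) ≤ (Set.ncard {i : Fin (N j) | ω ∈ A j i} : ℝ)}) :
    1 - (1 / β) * Real.exp (-(β ^ 2 * Γ ^ 2 * M / 2)) ≤
        (μ {ω | (Set.ncard {j : Fin S | ω ∈ F j} : ℝ) ≤ β * S}).toReal ∧
      (1 : ℝ) / 2 ≤ 1 - (1 / β) * Real.exp (-(β ^ 2 * Γ ^ 2 * M / 2)) := by
  classical
  have hM1 : (1 : ℝ) ≤ (M : ℝ) := by exact_mod_cast hM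
  have hS1 : (1 : ℝ) ≤ (S : ℝ) := by exact_mod_cast hS
  set δ : ℝ := Real.exp (-(β ^ 2 * Γ ^ 2 * M / 2)) with hδ_def
  -- Second conjunct: δ / β ≤ 1/2
  have hsecond : (1 : ℝ) / 2 ≤ 1 - (1 / β) * δ := by
    have h2β : (1 : ℝ) < 2 / β := by
      rw [lt_div_iff₀ hβpos]; linarith
    have hL : 0 < Real.log (2 / β) := Real.log_pos h2β
    have hx : 0 ≤ 2 * Real.log (2 / β) / (β ^ 2 * M) := by positivity
    have hΓ2 : 2 * Real.log (2 / β) / (β ^ 2 * M) ≤ Γ ^ 2 := by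
      calc 2 * Real.log (2 / β) / (β ^ 2 * M)
          = Real.sqrt (2 * Real.log (2 / β) / (β ^ 2 * M)) ^ 2 := (Real.sq_sqrt hx).symm
        _ ≤ Γ ^ 2 := pow_le_pow_left₀ (Real.sqrt_nonneg _) hΓ 2
    have hβM : 0 < β ^ 2 * (M : ℝ) := by positivity
    have hlogle : Real.log (2 / β) ≤ β ^ 2 * Γ ^ 2 * M / 2 := by
      rw [div_le_iff₀ hβM] at hΓ2
      nlinarith
    have hδle : δ ≤ β / 2 := by
      rw [hδ_def]
      calc Real.exp (-(β ^ 2 * Γ ^ 2 * M / 2)) ≤ Real.exp (-Real.log (2 / β)) := by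
            apply Real.exp_le_exp.2; linarith
        _ = β / 2 := by
            rw [Real.exp_neg, Real.exp_log (by positivity)]
            rw [inv_div]
    have : (1 / β) * δ ≤ 1 / 2 := by
      rw [div_mul_eq_mul_div, one_mul, div_le_div_iff₀ hβpos (by norm_num)]
      linarith
    linarith
  refine ⟨?_, hsecond⟩
  -- Per-object bound
  have hp0 : 0 ≤ Γ + β / 2 - β * Γ / 2 := by nlinarith
  have hFbound : ∀ j, (μ (F j)).toReal ≤ δ := by
    intro j
    have hkey := chernoff_count μ (N j) (A j) (hAmeas j) (hindep j)
      (Γ + β / 2 - β * Γ / 2) (β * Γ / 2) (by positivity) (hPA j)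
    have hpe : Γ + β / 2 - β * Γ / 2 + β * Γ / 2 = Γ + β / 2 := by ring
    rw [hpe] at hkey
    rw [hF j]
    refine hkey.trans ?_
    apply Real.exp_le_exp.2
    have hNj : (M : ℝ) ≤ (N j : ℝ) := by exact_mod_cast hN j
    have hexp_eq : -2 * (β * Γ / 2) ^ 2 * (N j : ℝ) = -(β ^ 2 * Γ ^ 2 * (N j : ℝ) / 2) := by
      ring
    rw [hexp_eq]
    have : β ^ 2 * Γ ^ 2 * (M : ℝ) ≤ β ^ 2 * Γ ^ 2 * (N j : ℝ) := by
      apply mul_le_mul_of_nonneg_left hNj (by positivity)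
    linarith
  -- Measurability of F j
  have hFmeas : ∀ j, MeasurableSet (F j) := by
    intro j
    rw [hF j]
    have hmeq : {ω | (Γ + β / 2) * (N j : ℝ) ≤ (Set.ncard {i : Fin (N j) | ω ∈ A j i} : ℝ)}
        = {ω | (Γ + β / 2) * (N j : ℝ) ≤
            ∑ i, (A j i).indicator (fun _ => (1 : ℝ)) ω} := by
      ext ω; simp only [Set.mem_setOf_eq, ncard_mem_eq_sum]
    rw [hmeq]
    exact measurableSet_le measurable_const
      (Finset.measurable_sum _ fun i _ => measurable_const.indicator (hAmeas j i))
  -- Markov step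
  set G : Ω → ℝ := fun ω => ∑ j, (F j).indicator (fun _ => (1 : ℝ)) ω with hG_def
  have hGmeas : Measurable G :=
    Finset.measurable_sum _ fun j _ => measurable_const.indicator (hFmeas j)
  have hGnonneg : ∀ ω, 0 ≤ G ω := fun ω =>
    Finset.sum_nonneg fun j _ => Set.indicator_nonneg (fun _ _ => zero_le_one) ω
  have hGint : Integrable G μ :=
    integrable_finset_sum _ fun j _ => (integrable_const (1 : ℝ)).indicator (hFmeas j)
  have hGE : ∫ ω, G ω ∂μ ≤ (S : ℝ) * δ := by
    rw [hG_def]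
    rw [integral_finset_sum _ fun j _ => (integrable_const (1 : ℝ)).indicator (hFmeas j)]
    calc ∑ j, ∫ ω, (F j).indicator (fun _ => (1 : ℝ)) ω ∂μ
        = ∑ j, (μ (F j)).toReal := by
          refine Finset.sum_congr rfl fun j _ => ?_
          rw [integral_indicator_const (1 : ℝ) (hFmeas j)]
          simp
          rfl
      _ ≤ ∑ _j : Fin S, δ := Finset.sum_le_sum fun j _ => hFbound j
      _ = (S : ℝ) * δ := by rw [Finset.sum_const]; simp [nsmul_eq_mul]
  have hmarkov := mul_meas_ge_le_integral_of_nonneg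
    (ae_of_all μ hGnonneg) hGint (β * S)
  have hβS : 0 < β * (S : ℝ) := by positivity
  have hbad : (μ {ω | β * (S : ℝ) ≤ G ω}).toReal ≤ (1 / β) * δ := by
    have h1 : β * (S : ℝ) * (μ {ω | β * (S : ℝ) ≤ G ω}).toReal ≤ (S : ℝ) * δ :=
      hmarkov.trans hGE
    have hm0 : 0 ≤ (μ {ω | β * (S : ℝ) ≤ G ω}).toReal := ENNReal.toReal_nonneg
    have hS0 : (0 : ℝ) < S := by linarith
    have h2 : (μ {ω | β * (S : ℝ) ≤ G ω}).toReal * β ≤ δ := by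
      nlinarith
    rw [div_mul_eq_mul_div, one_mul, le_div_iff₀ hβpos]
    linarith
  have hGcount : ∀ ω, ((Set.ncard {j : Fin S | ω ∈ F j} : ℝ)) = G ω := fun ω =>
    ncard_mem_eq_sum F ω
  set T : Set Ω := {ω | (Set.ncard {j : Fin S | ω ∈ F j} : ℝ) ≤ β * S} with hT_def
  have hTeq : T = {ω | G ω ≤ β * S} := by
    ext ω; simp only [hT_def, Set.mem_setOf_eq, hGcount ω]
  have hTmeas : MeasurableSet T := by
    rw [hTeq]; exact measurableSet_le hGmeas measurable_const
  have hTc : Tᶜ ⊆ {ω | β * (S : ℝ) ≤ G ω} := by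
    intro ω hω
    rw [hTeq] at hω
    simp only [Set.mem_compl_iff, Set.mem_setOf_eq, not_le] at hω
    exact le_of_lt hω
  have hTcbound : (μ Tᶜ).toReal ≤ (1 / β) * δ := by
    refine le_trans ?_ hbad
    exact ENNReal.toReal_mono (measure_ne_top μ _) (measure_mono hTc)
  have hsum : (μ T).toReal + (μ Tᶜ).toReal = 1 := by
    have h := measure_add_measure_compl hTmeas (μ := μ)
    have h2 := congrArg ENNReal.toReal h
    rw [ENNReal.toReal_add (measure_ne_top μ _) (measure_ne_top μ _)] at h2
    simpa using h2
  linarith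
end

section
/- Let Q and X be finite nonempty subsets of ℝ^d, let N = |Q|·|X|, let 0 < δ < ε < 1 and Γ ∈ (0,1] be reals with Γ ≥ sqrt(ln(1/δ) / ((ε−δ)² · N)), and let R ≥ 0 be a real with Γdist(Q,X) ≤ R. On a probability space, let {A_{(q,x)}}_{(q,x) ∈ Q×X} be mutually independent events such that P(A_{(q,x)}) ≥ 1−δ whenever ‖q−x‖ ≤ R. Then the probability that at least (1−ε)·Γ·N of the events A_{(q,x)} occur is at least 1−δ. -/
open MeasureTheory ProbabilityTheory

/-- The `R`-object similarity between two finite sets of feature vectors in `ℝ^d`: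
the fraction of pairs `(q, x) ∈ Q × X` whose Euclidean distance is at most `R`. -/
noncomputable def sim {d : ℕ} (Q X : Finset (EuclideanSpace ℝ (Fin d))) (R : ℝ) : ℝ :=
  (Set.ncard {p : EuclideanSpace ℝ (Fin d) × EuclideanSpace ℝ (Fin d) |
      p.1 ∈ Q ∧ p.2 ∈ X ∧ dist p.1 p.2 ≤ R} : ℝ) / ((Q.card : ℝ) * (X.card : ℝ))

/-- The `Γ`-distance between two finite sets of feature vectors:
`inf {R ≥ 0 : sim Q X R ≥ Γ}`. -/
noncomputable def gammaDist {d : ℕ} (Q X : Finset (EuclideanSpace ℝ (Fin d))) (Γ : ℝ) : ℝ :=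
  sInf {R : ℝ | 0 ≤ R ∧ Γ ≤ sim Q X R}

set_option maxHeartbeats 400000

theorem stmt7_aux_sim {d : ℕ} (Q X : Finset (EuclideanSpace ℝ (Fin d)))
    (hQ : Q.Nonempty) (hX : X.Nonempty)
    (Γ : ℝ) (hΓ1 : Γ ≤ 1) (R : ℝ) (hdist : gammaDist Q X Γ ≤ R) :
    Γ ≤ sim Q X R := by
  classical
  set P := Q ×ˢ X with hP
  have hPne : P.Nonempty := hQ.product hX
  have hN0 : (0 : ℝ) < (Q.card : ℝ) * (X.card : ℝ) := by
    have := hQ.card_pos; have := hX.card_pos; positivity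
  set N : ℝ := (Q.card : ℝ) * (X.card : ℝ) with hNdef
  have simC : ∀ r : ℝ, sim Q X r =
      ((P.filter (fun p => dist p.1 p.2 ≤ r)).card : ℝ) / N := by
    intro r
    unfold sim
    congr 2
    rw [show {p : EuclideanSpace ℝ (Fin d) × EuclideanSpace ℝ (Fin d) |
        p.1 ∈ Q ∧ p.2 ∈ X ∧ dist p.1 p.2 ≤ r} =
        ↑(P.filter (fun p => dist p.1 p.2 ≤ r)) by
      ext p; simp [hP, Finset.mem_product, and_assoc]]
    rw [Set.ncard_coe_finset]
  -- the set defining gammaDist is nonempty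
  obtain ⟨p₀, hp₀⟩ := hPne
  set R₀ : ℝ := (P.image (fun p => dist p.1 p.2)).max' ⟨_, Finset.mem_image_of_mem _ hp₀⟩ with hR₀
  have hR₀mem : ∀ p ∈ P, dist p.1 p.2 ≤ R₀ := by
    intro p hp
    exact Finset.le_max' _ _ (Finset.mem_image_of_mem (fun p => dist p.1 p.2) hp)
  have hR₀nonneg : 0 ≤ R₀ := le_trans dist_nonneg (hR₀mem p₀ hp₀)
  have hsimR₀ : Γ ≤ sim Q X R₀ := by
    rw [simC, Finset.filter_true_of_mem hR₀mem]
    rw [hP, Finset.card_product]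
    rw [div_eq_one_iff_eq (by positivity) |>.mpr (by push_cast; ring)] <;> linarith
  have hSne : {r : ℝ | 0 ≤ r ∧ Γ ≤ sim Q X r}.Nonempty := ⟨R₀, hR₀nonneg, hsimR₀⟩
  by_contra hcon
  push_neg at hcon
  -- every member of the set exceeds some fixed D > R
  set E := P.filter (fun p => R < dist p.1 p.2) with hE
  have hkey : ∀ s ∈ {r : ℝ | 0 ≤ r ∧ Γ ≤ sim Q X r}, ∃ p ∈ E, dist p.1 p.2 ≤ s := by
    rintro s ⟨hs0, hsΓ⟩
    have hcard : (P.filter (fun p => dist p.1 p.2 ≤ R)).card <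
        (P.filter (fun p => dist p.1 p.2 ≤ s)).card := by
      have h1 : (↑(P.filter (fun p => dist p.1 p.2 ≤ R)).card : ℝ) / N < Γ := by
        rw [simC] at hcon; exact hcon
      have h2 : Γ ≤ (↑(P.filter (fun p => dist p.1 p.2 ≤ s)).card : ℝ) / N := by
        rw [simC] at hsΓ; exact hsΓ
      have := lt_of_lt_of_le h1 h2
      have := (div_lt_div_iff_of_pos_right hN0).mp this
      exact_mod_cast this
    have hns : ¬ (P.filter (fun p => dist p.1 p.2 ≤ s) ⊆ P.filter (fun p => dist p.1 p.2 ≤ R)) :=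
      fun h => absurd (Finset.card_le_card h) (not_le.mpr hcard)
    obtain ⟨p, hps, hpR⟩ := Finset.not_subset.mp hns
    refine ⟨p, ?_, (Finset.mem_filter.mp hps).2⟩
    rw [hE, Finset.mem_filter]
    refine ⟨(Finset.mem_filter.mp hps).1, lt_of_not_ge fun h => ?_⟩
    exact hpR (Finset.mem_filter.mpr ⟨(Finset.mem_filter.mp hps).1, h⟩)
  have hEne : E.Nonempty := by
    obtain ⟨p, hp, _⟩ := hkey R₀ ⟨hR₀nonneg, hsimR₀⟩
    exact ⟨p, hp⟩
  set D := (E.image (fun p => dist p.1 p.2)).min' (hEne.image _) with hD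
  have hDR : R < D := by
    obtain ⟨q, hq, hqe⟩ := Finset.mem_image.mp ((E.image (fun p => dist p.1 p.2)).min'_mem (hEne.image _))
    have hDq : dist q.1 q.2 = D := hqe
    rw [← hDq]; exact (Finset.mem_filter.mp hq).2
  have hDle : D ≤ gammaDist Q X Γ := by
    apply le_csInf hSne
    intro s hs
    obtain ⟨p, hp, hps⟩ := hkey s hs
    exact le_trans (Finset.min'_le _ _ (Finset.mem_image_of_mem _ hp)) hps
  linarith [hdist]

/-- Part P1 of the paper's Lemma 1 with the LSH collision events abstracted. -/
theorem stmt_7 {d : ℕ} {Ω : Type*} [MeasurableSpace Ω] (μ : Measure Ω)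
    [IsProbabilityMeasure μ]
    (Q X : Finset (EuclideanSpace ℝ (Fin d))) (hQ : Q.Nonempty) (hX : X.Nonempty)
    (δ ε Γ : ℝ) (hδpos : 0 < δ) (hδε : δ < ε) (hε1 : ε < 1)
    (hΓpos : 0 < Γ) (hΓ1 : Γ ≤ 1)
    (hΓ : Γ ≥ Real.sqrt (Real.log (1 / δ) / ((ε - δ) ^ 2 * (Q.card * X.card : ℕ))))
    (R : ℝ) (hR : 0 ≤ R) (hdist : gammaDist Q X Γ ≤ R)
    (A : (Q ×ˢ X : Finset _) → Set Ω)
    (hAmeas : ∀ p, MeasurableSet (A p))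
    (hindep : iIndepSet A μ)
    (hPA : ∀ p : (Q ×ˢ X : Finset _), dist p.1.1 p.1.2 ≤ R → 1 - δ ≤ (μ (A p)).toReal) :
    1 - δ ≤
      (μ {ω | (1 - ε) * Γ * ((Q.card * X.card : ℕ) : ℝ) ≤
        (Set.ncard {p : (Q ×ˢ X : Finset _) | ω ∈ A p} : ℝ)}).toReal := by
    classical
  have hδ1 : δ < 1 := hδε.trans hε1
  -- basic numbers
  set N : ℝ := ((Q.card * X.card : ℕ) : ℝ) with hNdef
  have hQc : 0 < Q.card := hQ.card_pos
  have hXc : 0 < X.card := hX.card_pos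
  have hN1 : 1 ≤ N := by
    rw [hNdef]; exact_mod_cast Nat.one_le_iff_ne_zero.mpr (by positivity)
  have hN0 : 0 < N := lt_of_lt_of_le one_pos hN1
  -- Part 1 : many pairs are close
  have hsim : Γ ≤ sim Q X R := stmt7_aux_sim Q X hQ hX Γ hΓ1 R hdist
  set T : Finset (Q ×ˢ X : Finset _) :=
    Finset.univ.filter (fun p : (Q ×ˢ X : Finset _) => dist p.1.1 p.1.2 ≤ R) with hTdef
  have hTcard : Γ * N ≤ (T.card : ℝ) := by
    have hc : T.card = ((Q ×ˢ X).filter (fun p => dist p.1 p.2 ≤ R)).card := by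
      rw [hTdef, Finset.univ_eq_attach,
        Finset.filter_attach (fun q : EuclideanSpace ℝ (Fin d) × EuclideanSpace ℝ (Fin d) =>
          dist q.1 q.2 ≤ R) (Q ×ˢ X)]
      simp
    have hseteq : {p : EuclideanSpace ℝ (Fin d) × EuclideanSpace ℝ (Fin d) |
        p.1 ∈ Q ∧ p.2 ∈ X ∧ dist p.1 p.2 ≤ R}
        = ↑((Q ×ˢ X).filter (fun p => dist p.1 p.2 ≤ R)) := by
      ext p; simp [Finset.mem_product, and_assoc]
    have hsim2 : Γ ≤ (((Q ×ˢ X).filter (fun p => dist p.1 p.2 ≤ R)).card : ℝ) / N := by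
      have := hsim
      unfold sim at this
      rw [hseteq, Set.ncard_coe_finset] at this
      rw [hNdef]; push_cast
      push_cast at this
      exact this
    rw [hc]
    calc Γ * N ≤ ((((Q ×ˢ X).filter (fun p => dist p.1 p.2 ≤ R)).card : ℝ) / N) * N :=
          mul_le_mul_of_nonneg_right hsim2 hN0.le
      _ = _ := by field_simp
  set M : ℝ := (T.card : ℝ) with hMdef
  have hMN : M ≤ N := by
    rw [hMdef, hNdef]
    have : T.card ≤ Fintype.card (Q ×ˢ X : Finset _) := Finset.card_le_univ T
    rw [Fintype.card_coe, Finset.card_product] at this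
    exact_mod_cast this
  -- indicator random variables
  set B : (Q ×ˢ X : Finset _) → Ω → ℝ := fun p => (A p).indicator (fun _ => 1) with hBdef
  have hBmem : ∀ p, MemLp (B p) 2 μ :=
    fun p => memLp_indicator_const 2 (hAmeas p) 1 (Or.inr (measure_ne_top μ _))
  have hBint : ∀ p, Integrable (B p) μ := fun p => (hBmem p).integrable one_le_two
  have hBq : ∀ p, ∫ ω, B p ω ∂μ = (μ (A p)).toReal := fun p => integral_indicator_one (hAmeas p)
  have hq1 : ∀ p, (μ (A p)).toReal ≤ 1 := by
    intro p
    have h := prob_le_one (μ := μ) (s := A p)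
    simpa using ENNReal.toReal_mono ENNReal.one_ne_top h
  have hB01 : ∀ p ω, 0 ≤ B p ω ∧ B p ω ≤ 1 := by
    intro p ω; rw [hBdef]; simp [Set.indicator_apply]; split <;> norm_num
  -- the sum over close pairs
  set S : Ω → ℝ := ∑ p ∈ T, B p with hSdef
  have hSmem : MemLp S 2 μ := memLp_finset_sum' T (fun p _ => hBmem p)
  have hSint : Integrable S μ := hSmem.integrable one_le_two
  have hSapp : ∀ ω, S ω = ∑ p ∈ T, B p ω := fun ω => Finset.sum_apply ω T B
  set e : ℝ := ∫ ω, S ω ∂μ with hedef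
  have he : (1 - δ) * M ≤ e := by
    rw [hedef, hSdef]
    simp only [Finset.sum_apply]
    rw [integral_finset_sum T (fun p _ => hBint p)]
    have : ∀ p ∈ T, (1 : ℝ) - δ ≤ ∫ ω, B p ω ∂μ := by
      intro p hp
      rw [hBq]
      exact hPA p (Finset.mem_filter.mp hp).2
    calc (1 - δ) * M = ∑ _p ∈ T, (1 - δ) := by rw [hMdef, Finset.sum_const, nsmul_eq_mul, mul_comm]
      _ ≤ ∑ p ∈ T, ∫ ω, B p ω ∂μ := Finset.sum_le_sum this
  -- variance
  set v : ℝ := variance S μ with hvdef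
  have hv0 : 0 ≤ v := variance_nonneg _ _
  have hpairwise : (↑T : Set (Q ×ˢ X : Finset _)).Pairwise
      fun p q => IndepFun (B p) (B q) μ :=
    fun p _ q _ hpq => (hindep.iIndepFun_indicator).indepFun hpq
  have hvar : ∀ p, variance (B p) μ = (μ (A p)).toReal - (μ (A p)).toReal ^ 2 := by
    intro p
    rw [variance_eq_sub (hBmem p)]
    have h2 : (B p) ^ 2 = B p := by
      funext x
      rw [Pi.pow_apply, hBdef]
      simp only [Set.indicator_apply]
      split <;> norm_num
    rw [h2, show (fun x => B p x) = B p from rfl, hBq]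
  have hvsum : v = ∑ p ∈ T, variance (B p) μ := by
    rw [hvdef, hSdef]
    exact IndepFun.variance_sum (fun p _ => hBmem p) hpairwise
  have hvle : v ≤ δ * M := by
    rw [hvsum]
    have hterm : ∀ p ∈ T, variance (B p) μ ≤ δ := by
      intro p hp
      have hge : 1 - δ ≤ (μ (A p)).toReal := hPA p (Finset.mem_filter.mp hp).2
      have hle := hq1 p
      rw [hvar p]
      nlinarith [sq_nonneg (1 - (μ (A p)).toReal)]
    calc ∑ p ∈ T, variance (B p) μ ≤ ∑ _p ∈ T, δ := Finset.sum_le_sum hterm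
      _ = δ * M := by rw [hMdef, Finset.sum_const, nsmul_eq_mul, mul_comm]
  -- numeric inequalities
  set L : ℝ := Real.log (1 / δ) with hLdef
  have hL1 : 1 - δ ≤ L := by
    have := Real.log_le_sub_one_of_pos hδpos
    rw [hLdef, one_div, Real.log_inv]
    linarith
  have hΓ2 : L ≤ (ε - δ) ^ 2 * N * Γ ^ 2 := by
    have hd0 : 0 < (ε - δ) ^ 2 * N := by
      have : 0 < ε - δ := by linarith
      positivity
    have hx0 : 0 ≤ L / ((ε - δ) ^ 2 * N) := by
      apply div_nonneg _ hd0.le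
      rw [hLdef]
      apply Real.log_nonneg
      rw [le_div_iff₀ hδpos]; linarith
    have hsq : L / ((ε - δ) ^ 2 * N) ≤ Γ ^ 2 := by
      have h1 : Real.sqrt (L / ((ε - δ) ^ 2 * N)) ^ 2 ≤ Γ ^ 2 :=
        pow_le_pow_left₀ (Real.sqrt_nonneg _) hΓ 2
      rwa [Real.sq_sqrt hx0] at h1
    calc L = (L / ((ε - δ) ^ 2 * N)) * ((ε - δ) ^ 2 * N) := by
          rw [div_mul_cancel₀ _ hd0.ne']
      _ ≤ Γ ^ 2 * ((ε - δ) ^ 2 * N) := mul_le_mul_of_nonneg_right hsq hd0.le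
      _ = (ε - δ) ^ 2 * N * Γ ^ 2 := by ring
  set c : ℝ := (1 - ε) * Γ * N with hcdef
  set t : ℝ := e - c with htdef
  have htge : (ε - δ) * (Γ * N) ≤ t := by
    have hM1 : Γ * N ≤ M := hTcard
    rw [htdef, hcdef]
    have h := mul_le_mul_of_nonneg_left hM1 (show (0:ℝ) ≤ 1 - δ by linarith)
    linarith [he, h]
  have ht0 : 0 < t :=
    lt_of_lt_of_le (mul_pos (by linarith) (mul_pos hΓpos hN0)) htge
  have ht2 : (1 - δ) * N ≤ t ^ 2 := by
    have h1 : ((ε - δ) * (Γ * N)) ^ 2 ≤ t ^ 2 :=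
      pow_le_pow_left₀ (mul_pos (show (0:ℝ) < ε - δ by linarith) (mul_pos hΓpos hN0)).le htge 2
    have h2 : ((ε - δ) * (Γ * N)) ^ 2 = ((ε - δ) ^ 2 * N * Γ ^ 2) * N := by ring
    have h3 : L * N ≤ ((ε - δ) ^ 2 * N * Γ ^ 2) * N := mul_le_mul_of_nonneg_right hΓ2 hN0.le
    have h4 : (1 - δ) * N ≤ L * N := mul_le_mul_of_nonneg_right hL1 hN0.le
    linarith [h1, h2, h3, h4]
  have key : (1 - δ) * v ≤ δ * t ^ 2 := by
    have hδ0' : (0:ℝ) ≤ 1 - δ := by linarith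
    have k1 : (1 - δ) * v ≤ (1 - δ) * (δ * M) := mul_le_mul_of_nonneg_left hvle hδ0'
    have k2 : (1 - δ) * (δ * M) ≤ (1 - δ) * (δ * N) :=
      mul_le_mul_of_nonneg_left (mul_le_mul_of_nonneg_left hMN hδpos.le) hδ0'
    have k3 : δ * ((1 - δ) * N) ≤ δ * t ^ 2 := mul_le_mul_of_nonneg_left ht2 hδpos.le
    have k4 : (1 - δ) * (δ * N) = δ * ((1 - δ) * N) := by ring
    linarith [k1, k2, k3, k4]
  -- Cantelli via Markov
  set u : ℝ := v / t with hudef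
  have hu0 : 0 ≤ u := div_nonneg hv0 ht0.le
  have hut : u * t = v := div_mul_cancel₀ v ht0.ne'
  set g : Ω → ℝ := fun ω => ((u + e) - S ω) ^ 2 with hgdef
  have hg0 : ∀ ω, 0 ≤ g ω := fun ω => sq_nonneg _
  have hgmem : MemLp (fun ω => (u + e) - S ω) 2 μ := (memLp_const (u + e)).sub hSmem
  have hgint : Integrable g μ := hgmem.integrable_sq
  have hSsqint : Integrable (fun x => S x ^ 2) μ := hSmem.integrable_sq
  have hintg : ∫ ω, g ω ∂μ = v + u ^ 2 := by
    have hvS : v = (∫ x, S x ^ 2 ∂μ) - e ^ 2 := by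
      rw [hvdef, variance_eq_sub hSmem, ← hedef]
      congr 1
    have hrw : g = fun x => S x ^ 2 - (2 * (u + e)) * S x + (u + e) ^ 2 := by
      funext x; rw [hgdef]; ring
    have hint2 : Integrable (fun x => (2 * (u + e)) * S x) μ := hSint.const_mul _
    have hint1 : Integrable (fun x => S x ^ 2 - (2 * (u + e)) * S x) μ := hSsqint.sub hint2
    rw [hrw, integral_add hint1 (integrable_const _),
      integral_sub hSsqint hint2, integral_const_mul, integral_const,
      probReal_univ, ← hedef]
    simp only [ENNReal.toReal_one, smul_eq_mul, one_mul]
    rw [show (∫ x, S x ^ 2 ∂μ) = v + e ^ 2 by rw [hvS]; ring]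
    ring
  have hmarkov := mul_meas_ge_le_integral_of_nonneg
    (Filter.Eventually.of_forall hg0) hgint ((u + t) ^ 2)
  -- the target event
  set Tgt : Set Ω := {ω | c ≤ (Set.ncard {p : (Q ×ˢ X : Finset _) | ω ∈ A p} : ℝ)} with hTgtdef
  have hcnt : ∀ ω, (Set.ncard {p : (Q ×ˢ X : Finset _) | ω ∈ A p} : ℝ)
      = ∑ p : (Q ×ˢ X : Finset _), B p ω := by
    intro ω
    have h1 : {p : (Q ×ˢ X : Finset _) | ω ∈ A p}
        = ↑(Finset.univ.filter (fun p => ω ∈ A p)) := by ext p; simp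
    rw [h1, Set.ncard_coe_finset, Finset.card_filter]
    push_cast
    apply Finset.sum_congr rfl
    intro p _
    rw [hBdef]
    simp [Set.indicator_apply]
  have hScnt : ∀ ω, S ω ≤ ∑ p : (Q ×ˢ X : Finset _), B p ω := by
    intro ω
    rw [hSapp]
    exact Finset.sum_le_sum_of_subset_of_nonneg (Finset.subset_univ T)
      (fun p _ _ => (hB01 p ω).1)
  have hTgtmeas : MeasurableSet Tgt := by
    have hmeasB : Measurable (fun ω => ∑ p : (Q ×ˢ X : Finset _), B p ω) := by
      apply Finset.measurable_sum
      intro p _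
      rw [hBdef]
      exact (measurable_const).indicator (hAmeas p)
    have : Tgt = {ω | c ≤ ∑ p : (Q ×ˢ X : Finset _), B p ω} := by
      rw [hTgtdef]; ext ω; rw [Set.mem_setOf_eq, Set.mem_setOf_eq, hcnt ω]
    rw [this]
    exact measurableSet_le measurable_const hmeasB
  have hsub : Tgtᶜ ⊆ {x | (u + t) ^ 2 ≤ g x} := by
    intro ω hω
    rw [Set.mem_compl_iff, hTgtdef, Set.mem_setOf_eq, not_le, hcnt ω] at hω
    have hS : S ω < c := lt_of_le_of_lt (hScnt ω) hω
    rw [Set.mem_setOf_eq, hgdef]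
    have h1 : u + t ≤ (u + e) - S ω := by rw [htdef]; linarith
    exact pow_le_pow_left₀ (by linarith [hu0, ht0]) h1 2
  -- put it together
  have hup0 : 0 < (u + t) ^ 2 := pow_pos (by linarith [hu0, ht0]) 2
  have hfinal : (μ Tgtᶜ).toReal ≤ δ := by
    have h1 : (μ Tgtᶜ).toReal ≤ (μ {x | (u + t) ^ 2 ≤ g x}).toReal :=
      ENNReal.toReal_mono (measure_ne_top μ _) (measure_mono hsub)
    have h2 : v + u ^ 2 ≤ δ * (u + t) ^ 2 := by
      have hu2 : (1 - δ) * u ^ 2 ≤ δ * v := by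
        have h3 : ((1 - δ) * u ^ 2) * t ^ 2 ≤ (δ * v) * t ^ 2 := by
          have key2 := mul_le_mul_of_nonneg_right key hv0
          rw [← hut] at key2 ⊢
          have hid1 : ((1 - δ) * (u * t)) * (u * t) = ((1 - δ) * u ^ 2) * t ^ 2 := by ring
          have hid2 : (δ * t ^ 2) * (u * t) = (δ * (u * t)) * t ^ 2 := by ring
          linarith [key2, hid1, hid2]
        exact le_of_mul_le_mul_right h3 (pow_pos ht0 2)
      have hut2 : δ * (u * t) = δ * v := by rw [hut]
      have hid : δ * (u + t) ^ 2 = δ * u ^ 2 + 2 * (δ * (u * t)) + δ * t ^ 2 := by ring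
      linarith [hu2, key, hut2, hid]
    have h3 : (u + t) ^ 2 * (μ Tgtᶜ).toReal ≤ (u + t) ^ 2 * δ := by
      calc (u + t) ^ 2 * (μ Tgtᶜ).toReal ≤ (u + t) ^ 2 * (μ {x | (u + t) ^ 2 ≤ g x}).toReal :=
            mul_le_mul_of_nonneg_left h1 hup0.le
        _ ≤ ∫ ω, g ω ∂μ := hmarkov
        _ = v + u ^ 2 := hintg
        _ ≤ δ * (u + t) ^ 2 := h2
        _ = (u + t) ^ 2 * δ := by ring
    exact le_of_mul_le_mul_left h3 hup0
  have hsplit : (μ Tgt).toReal + (μ Tgtᶜ).toReal = 1 := by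
    have := measure_add_measure_compl hTgtmeas (μ := μ)
    rw [measure_univ] at this
    have h4 := congrArg ENNReal.toReal this
    rw [ENNReal.toReal_add (measure_ne_top μ _) (measure_ne_top μ _)] at h4
    simpa using h4
  have : 1 - δ ≤ (μ Tgt).toReal := by linarith
  exact this
end

section
/- Let Q and X be finite nonempty subsets of ℝ^d, let N = |Q|·|X|, let β, Γ ∈ (0,1] and c ≥ 1 be reals, and let R ≥ 0 be a real with Γdist(Q,X) > cR. On a probability space, let {A_{(q,x)}}_{(q,x) ∈ Q×X} be mutually independent events such that P(A_{(q,x)}) ≤ β/2 whenever ‖q−x‖ > cR. Then the probability that at least (Γ + β/2)·N of the events A_{(q,x)} occur is at most exp(−β²Γ²N/2). -/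
open MeasureTheory ProbabilityTheory

lemma aux_quarter (x H : ℝ) (hH : 0 < H) :
    0 ≤ 1 / 4 - (x * H - x * x) / H ^ 2 := by
  rw [sub_nonneg, div_le_iff₀ (by positivity)]
  nlinarith [sq_nonneg (H - 2 * x)]

lemma bern_pos {p : ℝ} (hp0 : 0 ≤ p) (hp1 : p ≤ 1) (u : ℝ) :
    0 < 1 + p * (Real.exp u - 1) := by
  nlinarith [Real.exp_pos u, mul_nonneg hp0 (Real.exp_pos u).le]

lemma bernoulli_mgf_le {p : ℝ} (hp0 : 0 ≤ p) (hp1 : p ≤ 1) (t : ℝ) :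
    1 + p * (Real.exp t - 1) ≤ Real.exp (p * t + t ^ 2 / 8) := by
  set h : ℝ → ℝ := fun u => 1 + p * (Real.exp u - 1) with hh
  have hpos : ∀ u, 0 < h u := bern_pos hp0 hp1
  set f : ℝ → ℝ := fun u => p * u + u ^ 2 / 8 - Real.log (h u) with hf
  set g : ℝ → ℝ := fun u => p + u / 4 - p * Real.exp u / h u with hgdef
  have hDh : ∀ u, HasDerivAt h (p * Real.exp u) u := by
    intro u
    exact (((Real.hasDerivAt_exp u).sub_const 1).const_mul p).const_add 1
  have hDf : ∀ u, HasDerivAt f (g u) u := by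
    intro u
    have h2 : HasDerivAt (fun u : ℝ => p * u) p u := by
      simpa using (hasDerivAt_id u).const_mul p
    have h1 : HasDerivAt (fun u : ℝ => p * u + u ^ 2 / 8) (p + 2 * u / 8) u := by
      exact (h2.add ((hasDerivAt_pow 2 u).div_const 8)).congr_deriv (by norm_num)
    have h3 : HasDerivAt (fun u => Real.log (h u)) (p * Real.exp u / h u) u := by
      simpa using (hDh u).log (hpos u).ne'
    have := h1.sub h3
    refine this.congr_deriv ?_
    show _ = p + u / 4 - p * Real.exp u / h u; ring
  have hDg : ∀ u, HasDerivAt g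
      (1 / 4 - (p * Real.exp u * h u - p * Real.exp u * (p * Real.exp u)) / (h u) ^ 2) u := by
    intro u
    have h4 : HasDerivAt (fun u => p * Real.exp u / h u)
        ((p * Real.exp u * h u - p * Real.exp u * (p * Real.exp u)) / (h u) ^ 2) u :=
      (((Real.hasDerivAt_exp u).const_mul p).div (hDh u) (hpos u).ne')
    have h5 : HasDerivAt (fun u : ℝ => p + u / 4) (1 / 4) u := by
      simpa using ((hasDerivAt_id u).div_const 4).const_add p
    exact h5.sub h4
  have hgmono : Monotone g := by
    apply monotone_of_deriv_nonneg (fun u => (hDg u).differentiableAt)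
    intro u
    rw [(hDg u).deriv]
    exact aux_quarter (p * Real.exp u) (h u) (hpos u)
  have hg0 : g 0 = 0 := by simp [hgdef, hh]
  have hfcont : Continuous f := by
    have : Differentiable ℝ f := fun u => (hDf u).differentiableAt
    exact this.continuous
  have key : f 0 ≤ f t := by
    rcases le_total 0 t with ht | ht
    · have := monotoneOn_of_deriv_nonneg (convex_Ici 0) hfcont.continuousOn
        (fun u _ => (hDf u).differentiableAt.differentiableWithinAt)
        (fun u hu => by
          rw [(hDf u).deriv]
          rw [interior_Ici] at hu
          have := hgmono (le_of_lt hu)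
          rw [hg0] at this; exact this)
      exact this Set.self_mem_Ici ht ht
    · have := antitoneOn_of_deriv_nonpos (convex_Iic 0) hfcont.continuousOn
        (fun u _ => (hDf u).differentiableAt.differentiableWithinAt)
        (fun u hu => by
          rw [(hDf u).deriv]
          rw [interior_Iic] at hu
          have := hgmono (le_of_lt hu)
          rw [hg0] at this; exact this)
      exact this ht Set.self_mem_Iic ht
  have hf0 : f 0 = 0 := by simp [hf, hh]
  rw [hf0] at key
  have : Real.log (h t) ≤ p * t + t ^ 2 / 8 := by simp only [hf] at key; linarith
  calc h t = Real.exp (Real.log (h t)) := (Real.exp_log (hpos t)).symm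
    _ ≤ _ := Real.exp_le_exp.2 this

lemma final_num {β Γ Nr sr : ℝ} (hβ0 : 0 < β) (hβ1 : β ≤ 1) (hΓ0 : 0 < Γ) (hΓ1 : Γ ≤ 1)
    (hN1 : 1 ≤ Nr) (hs0 : 0 ≤ sr) (hsΓ : sr < Γ * Nr) (hm1 : 1 ≤ Nr - sr) :
    ∃ t, 0 ≤ t ∧ -t * ((Γ + β / 2) * Nr) +
      (sr * t + (Nr - sr) * (β / 2 * t + t ^ 2 / 8)) ≤ -(β ^ 2 * Γ ^ 2 * Nr / 2) := by
  set mr := Nr - sr with hmr'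
  have hmr : 0 < mr := by linarith
  set a := (Γ + β / 2) * Nr - sr - β / 2 * mr with ha
  have haq : β / 2 * Γ * Nr < a := by
    have h1 : (0:ℝ) < 1 - β / 2 := by linarith
    have h2 : (0:ℝ) < Γ * Nr - sr := by linarith
    nlinarith [mul_pos h1 h2]
  have ha0 : 0 < a := lt_trans (by positivity) haq
  refine ⟨4 * a / mr, by positivity, ?_⟩
  have heq : -(4 * a / mr) * ((Γ + β / 2) * Nr) +
      (sr * (4 * a / mr) + mr * (β / 2 * (4 * a / mr) + (4 * a / mr) ^ 2 / 8)) =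
      -(2 * a ^ 2 / mr) := by
    field_simp
    ring
  rw [heq]
  have hsq : (β / 2 * Γ * Nr) ^ 2 ≤ a ^ 2 :=
    pow_le_pow_left₀ (by positivity) haq.le 2
  have h2 : β ^ 2 * Γ ^ 2 * Nr / 2 ≤ 2 * a ^ 2 / mr := by
    rw [le_div_iff₀ hmr]
    have h3 : mr ≤ Nr := by linarith
    have h4 : (0:ℝ) ≤ β ^ 2 * Γ ^ 2 * Nr / 2 := by positivity
    nlinarith [mul_le_mul_of_nonneg_left h3 h4]
  linarith

/-- Per-object content of part P2 of the paper's Lemma 1 with the LSH collision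
events abstracted. -/
theorem stmt_8 {d : ℕ} {Ω : Type*} [MeasurableSpace Ω] (μ : Measure Ω)
    [IsProbabilityMeasure μ]
    (Q X : Finset (EuclideanSpace ℝ (Fin d))) (hQ : Q.Nonempty) (hX : X.Nonempty)
    (β Γ c : ℝ) (hβpos : 0 < β) (hβ1 : β ≤ 1) (hΓpos : 0 < Γ) (hΓ1 : Γ ≤ 1) (hc : 1 ≤ c)
    (R : ℝ) (hR : 0 ≤ R) (hdist : c * R < gammaDist Q X Γ)
    (A : (Q ×ˢ X : Finset _) → Set Ω)
    (hAmeas : ∀ p, MeasurableSet (A p))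
    (hindep : iIndepSet A μ)
    (hPA : ∀ p : (Q ×ˢ X : Finset _), c * R < dist p.1.1 p.1.2 →
      (μ (A p)).toReal ≤ β / 2) :
    (μ {ω | (Γ + β / 2) * ((Q.card * X.card : ℕ) : ℝ) ≤
        (Set.ncard {p : (Q ×ˢ X : Finset _) | ω ∈ A p} : ℝ)}).toReal ≤
      Real.exp (-(β ^ 2 * Γ ^ 2 * ((Q.card * X.card : ℕ) : ℝ) / 2)) := by
  classical
  set Nn : ℕ := Q.card * X.card with hNn
  have hNP : (Q ×ˢ X).card = Nn := Finset.card_product Q X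
  have hNpos : 0 < Nn := Nat.mul_pos (Finset.card_pos.2 hQ) (Finset.card_pos.2 hX)
  set pred : EuclideanSpace ℝ (Fin d) × EuclideanSpace ℝ (Fin d) → Prop :=
    fun p => dist p.1 p.2 ≤ c * R with hpred
  set sN : ℕ := ((Q ×ˢ X).filter pred).card with hsN
  -- Step A : (sN : ℝ) < Γ * Nn
  have hcR0 : 0 ≤ c * R := mul_nonneg (by linarith) hR
  have hsim : sim Q X (c * R) < Γ := by
    by_contra hle
    push_neg at hle
    have : gammaDist Q X Γ ≤ c * R :=
      csInf_le ⟨0, fun x hx => hx.1⟩ ⟨hcR0, hle⟩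
    linarith
  have hsetA : {p : EuclideanSpace ℝ (Fin d) × EuclideanSpace ℝ (Fin d) |
      p.1 ∈ Q ∧ p.2 ∈ X ∧ dist p.1 p.2 ≤ c * R} = ↑((Q ×ˢ X).filter pred) := by
    ext p
    simp [hpred, Finset.mem_filter, Finset.mem_product, and_assoc]
  have hsimval : sim Q X (c * R) = (sN : ℝ) / (Nn : ℝ) := by
    rw [sim, hsetA, Set.ncard_coe_finset, ← hsN, hNn]
    push_cast
    ring_nf
  have hsΓ : (sN : ℝ) < Γ * (Nn : ℝ) := by
    rw [hsimval, div_lt_iff₀ (by exact_mod_cast hNpos)] at hsim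
    linarith [hsim]
  -- indicator random variables
  set Y : ↥(Q ×ˢ X) → Ω → ℝ := fun i => (A i).indicator fun _ => 1 with hY
  have hYmeas : ∀ i, Measurable (Y i) := fun i => measurable_const.indicator (hAmeas i)
  have hYindep : iIndepFun Y μ := hindep.iIndepFun_indicator
  have hpA0 : ∀ i, 0 ≤ (μ (A i)).toReal := fun i => ENNReal.toReal_nonneg
  have hpA1 : ∀ i, (μ (A i)).toReal ≤ 1 := fun i => by
    simpa using ENNReal.toReal_mono ENNReal.one_ne_top (prob_le_one (μ := μ) (s := A i))
  have hrep : ∀ (i) (t : ℝ), (fun ω => Real.exp (t * Y i ω)) =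
      fun ω => (A i).indicator (fun _ => Real.exp t) ω + (A i)ᶜ.indicator (fun _ => (1:ℝ)) ω := by
    intro i t
    funext ω
    by_cases hω : ω ∈ A i <;> simp [hY, Set.indicator_apply, hω]
  have hint : ∀ (i) (t : ℝ), Integrable (fun ω => Real.exp (t * Y i ω)) μ := by
    intro i t
    rw [hrep i t]
    exact ((integrable_const _).indicator (hAmeas i)).add
      ((integrable_const _).indicator (hAmeas i).compl)
  have hmgf : ∀ (i) (t : ℝ), mgf (Y i) μ t = 1 + (μ (A i)).toReal * (Real.exp t - 1) := by
    intro i t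
    rw [mgf, hrep i t, integral_add ((integrable_const _).indicator (hAmeas i))
      ((integrable_const _).indicator (hAmeas i).compl),
      integral_indicator_const _ (hAmeas i), integral_indicator_const _ (hAmeas i).compl,
      probReal_compl_eq_one_sub (hAmeas i)]
    simp only [smul_eq_mul, Measure.real]
    ring
  -- count = sum of indicators
  have hcount : ∀ ω, (Set.ncard {p : ↥(Q ×ˢ X) | ω ∈ A p} : ℝ) =
      (∑ i : ↥(Q ×ˢ X), Y i) ω := by
    intro ω
    rw [Set.ncard_eq_toFinset_card']
    simp only [Finset.sum_apply]
    rw [Set.toFinset_setOf, Finset.card_filter]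
    push_cast
    refine Finset.sum_congr rfl fun i _ => ?_
    by_cases hω : ω ∈ A i <;> simp [hY, Set.indicator_apply, hω]
  -- the numeric choice of t
  have hN1 : (1:ℝ) ≤ (Nn : ℝ) := by exact_mod_cast hNpos
  have hsNlt : sN < Nn := by
    have : (sN : ℝ) < (Nn : ℝ) := lt_of_lt_of_le hsΓ (by nlinarith)
    exact_mod_cast this
  have hm1 : (1:ℝ) ≤ (Nn : ℝ) - (sN : ℝ) := by
    have : (sN : ℝ) + 1 ≤ (Nn : ℝ) := by exact_mod_cast hsNlt
    linarith
  obtain ⟨t, ht0, htineq⟩ := final_num hβpos hβ1 hΓpos hΓ1 hN1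
    (by positivity) hsΓ hm1
  -- rewrite the event
  have hevent : {ω | (Γ + β / 2) * ((Q.card * X.card : ℕ) : ℝ) ≤
      (Set.ncard {p : ↥(Q ×ˢ X) | ω ∈ A p} : ℝ)} =
      {ω | (Γ + β / 2) * (Nn : ℝ) ≤ (∑ i : ↥(Q ×ˢ X), Y i) ω} := by
    ext ω
    rw [Set.mem_setOf_eq, Set.mem_setOf_eq, hcount ω, hNn]
  rw [hevent]
  -- Chernoff
  have hintsum : Integrable (fun ω => Real.exp (t * (∑ i : ↥(Q ×ˢ X), Y i) ω)) μ :=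
    hYindep.integrable_exp_mul_sum hYmeas (fun i _ => hint i t)
  have hchern := measure_ge_le_exp_mul_mgf (X := ∑ i : ↥(Q ×ˢ X), Y i) (μ := μ)
    ((Γ + β / 2) * (Nn : ℝ)) ht0 hintsum
  refine hchern.trans ?_
  -- bound the mgf
  have hprod : mgf (∑ i : ↥(Q ×ˢ X), Y i) μ t = ∏ i : ↥(Q ×ˢ X), mgf (Y i) μ t :=
    hYindep.mgf_sum hYmeas Finset.univ
  have hfac : ∀ i : ↥(Q ×ˢ X), mgf (Y i) μ t ≤
      Real.exp (if pred i.1 then t else β / 2 * t + t ^ 2 / 8) := by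
    intro i
    rw [hmgf i t]
    by_cases hi : pred i.1
    · rw [if_pos hi]
      have he1 : 1 ≤ Real.exp t := Real.one_le_exp ht0
      nlinarith [hpA0 i, hpA1 i]
    · rw [if_neg hi]
      have hdistfar : c * R < dist i.1.1 i.1.2 := lt_of_not_ge hi
      have hqi : (μ (A i)).toReal ≤ β / 2 := hPA i hdistfar
      have he1 : 1 ≤ Real.exp t := Real.one_le_exp ht0
      calc 1 + (μ (A i)).toReal * (Real.exp t - 1)
          ≤ 1 + β / 2 * (Real.exp t - 1) := by nlinarith [hpA0 i]
        _ ≤ Real.exp (β / 2 * t + t ^ 2 / 8) :=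
            bernoulli_mgf_le (by linarith) (by linarith) t
  have hprodle : ∏ i : ↥(Q ×ˢ X), mgf (Y i) μ t ≤
      ∏ i : ↥(Q ×ˢ X), Real.exp (if pred i.1 then t else β / 2 * t + t ^ 2 / 8) :=
    Finset.prod_le_prod (fun i _ => mgf_nonneg) (fun i _ => hfac i)
  -- compute the product of exponentials
  have hsumsplit : (∑ i : ↥(Q ×ˢ X), (if pred i.1 then t else β / 2 * t + t ^ 2 / 8)) =
      (sN : ℝ) * t + ((Nn : ℝ) - (sN : ℝ)) * (β / 2 * t + t ^ 2 / 8) := by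
    rw [Finset.sum_ite, Finset.sum_const, Finset.sum_const]
    have hcards : (Finset.univ.filter fun i : ↥(Q ×ˢ X) => pred i.1).card = sN := by
      have := Finset.filter_attach pred (Q ×ˢ X)
      rw [hsN]
      calc (Finset.univ.filter fun i : ↥(Q ×ˢ X) => pred i.1).card
          = ((Q ×ˢ X).attach.filter fun i => pred i.1).card := by rw [Finset.attach_eq_univ]
        _ = (((Q ×ˢ X).filter pred).attach.map
              ((Function.Embedding.refl _).subtypeMap Finset.mem_of_mem_filter)).card :=
            congrArg Finset.card this
        _ = ((Q ×ˢ X).filter pred).card := by rw [Finset.card_map, Finset.card_attach]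
    have hcardneg : ((Finset.univ.filter fun i : ↥(Q ×ˢ X) => ¬ pred i.1).card : ℝ) =
        (Nn : ℝ) - (sN : ℝ) := by
      have h := Finset.card_filter_add_card_filter_not
        (s := (Finset.univ : Finset ↥(Q ×ˢ X))) (p := fun i => pred i.1)
      rw [Finset.card_univ, Fintype.card_coe, hNP, hcards] at h
      have : (Finset.univ.filter fun i : ↥(Q ×ˢ X) => ¬ pred i.1).card = Nn - sN := by omega
      rw [this]
      have hle : sN ≤ Nn := le_of_lt hsNlt
      push_cast [Nat.cast_sub hle]
      ring
    rw [hcards, nsmul_eq_mul, nsmul_eq_mul, hcardneg]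
  have hexp_prod : ∏ i : ↥(Q ×ˢ X), Real.exp (if pred i.1 then t else β / 2 * t + t ^ 2 / 8) =
      Real.exp ((sN : ℝ) * t + ((Nn : ℝ) - (sN : ℝ)) * (β / 2 * t + t ^ 2 / 8)) := by
    rw [← Real.exp_sum, hsumsplit]
  calc Real.exp (-t * ((Γ + β / 2) * (Nn : ℝ))) * mgf (∑ i : ↥(Q ×ˢ X), Y i) μ t
      ≤ Real.exp (-t * ((Γ + β / 2) * (Nn : ℝ))) *
        Real.exp ((sN : ℝ) * t + ((Nn : ℝ) - (sN : ℝ)) * (β / 2 * t + t ^ 2 / 8)) := by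
        rw [hprod]
        exact mul_le_mul_of_nonneg_left (hprodle.trans_eq hexp_prod) (Real.exp_nonneg _)
    _ = Real.exp (-t * ((Γ + β / 2) * (Nn : ℝ)) +
        ((sN : ℝ) * t + ((Nn : ℝ) - (sN : ℝ)) * (β / 2 * t + t ^ 2 / 8))) := by
        rw [← Real.exp_add]
    _ ≤ Real.exp (-(β ^ 2 * Γ ^ 2 * ((Q.card * X.card : ℕ) : ℝ) / 2)) := by
        apply Real.exp_le_exp.2
        rw [← hNn]
        exact htineq
end

section
/- Let Q be a finite nonempty subset of ℝ^d (the query object) and let X_1, …, X_S be finite nonempty subsets of ℝ^d (the dataset objects) with L = min_j |X_j|. Let β, Γ ∈ (0,1] and c ≥ 1 be reals with Γ ≥ sqrt(2·ln(2/β) / (β² · |Q| · L)), and let R ≥ 0. On a probability space, for each j let {A^j_{(q,x)}}_{(q,x) ∈ Q×X_j} be mutually independent events such that P(A^j_{(q,x)}) ≤ β/2 whenever ‖q−x‖ > cR. Let FP be the (random) set of indices j such that Γdist(Q,X_j) > cR and at least (Γ + β/2)·|Q|·|X_j| of the events A^j_{(q,x)} occur. Then P(|FP| ≤ β·S) ≥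 1/2. -/
open MeasureTheory ProbabilityTheory

/-! ### Auxiliary lemmas -/

/-- Hoeffding's lemma for a Bernoulli random variable. -/
lemma aux_bernoulli_mgf_le {p : ℝ} (hp0 : 0 ≤ p) (hp1 : p ≤ 1) (t : ℝ) :
    1 - p + p * Real.exp t ≤ Real.exp (p * t + t ^ 2 / 8) := by
  set D : ℝ → ℝ := fun t => 1 - p + p * Real.exp t with hDdef
  have hD : ∀ s, 0 < D s := by
    intro s
    have := Real.exp_pos s
    rcases hp0.eq_or_lt with h | h
    · simp [hDdef, ← h]
    · simp only [hDdef]; nlinarith [mul_pos h this]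
  have hDderiv : ∀ s : ℝ, HasDerivAt D (p * Real.exp s) s := by
    intro s
    exact ((Real.hasDerivAt_exp s).const_mul p).const_add (1 - p)
  set g : ℝ → ℝ := fun s => p + s / 4 - p * Real.exp s / D s with hgdef
  set f : ℝ → ℝ := fun s => p * s + s ^ 2 / 8 - Real.log (D s) with hfdef
  have hfderiv : ∀ s : ℝ, HasDerivAt f (g s) s := by
    intro s
    have h1 : HasDerivAt (fun s : ℝ => p * s + s ^ 2 / 8) (p + s * 2 / 8) s := by
      have h2 : HasDerivAt (fun s : ℝ => p * s) p s := by
        simpa using (hasDerivAt_id s).const_mul p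
      exact (h2.add ((hasDerivAt_pow 2 s).div_const 8)).congr_deriv (by norm_num; ring)
    have h3 : HasDerivAt (fun s => Real.log (D s)) (p * Real.exp s / D s) s :=
      (hDderiv s).log (hD s).ne'
    have := h1.sub h3
    refine this.congr_deriv ?_
    simp only [hgdef]
    ring
  have hgderiv : ∀ s : ℝ, HasDerivAt g
      (1 / 4 - (p * Real.exp s * D s - p * Real.exp s * (p * Real.exp s)) / D s ^ 2) s := by
    intro s
    have hq : HasDerivAt (fun s => p * Real.exp s / D s)
        ((p * Real.exp s * D s - p * Real.exp s * (p * Real.exp s)) / D s ^ 2) s :=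
      ((Real.hasDerivAt_exp s).const_mul p).div (hDderiv s) (hD s).ne'
    have hl : HasDerivAt (fun s : ℝ => p + s / 4) (1 / 4) s := by
      simpa using ((hasDerivAt_id s).div_const 4).const_add p
    exact hl.sub hq
  have hg' : ∀ s : ℝ,
      0 ≤ 1 / 4 - (p * Real.exp s * D s - p * Real.exp s * (p * Real.exp s)) / D s ^ 2 := by
    intro s
    have hnum : p * Real.exp s * D s - p * Real.exp s * (p * Real.exp s)
        = p * Real.exp s * (1 - p) := by simp only [hDdef]; ring
    rw [hnum, sub_nonneg, div_le_iff₀ (pow_pos (hD s) 2)]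
    have h := Real.exp_pos s
    nlinarith [sq_nonneg (1 - p - p * Real.exp s)]
  have hgmono : Monotone g :=
    monotone_of_deriv_nonneg (fun s => (hgderiv s).differentiableAt)
      (fun s => by rw [(hgderiv s).deriv]; exact hg' s)
  have hg0 : g 0 = 0 := by simp [hgdef, hDdef]
  have hf0 : f 0 = 0 := by simp [hfdef, hDdef]
  have hfdiff : Differentiable ℝ f := fun s => (hfderiv s).differentiableAt
  have hft : ∀ s : ℝ, 0 ≤ f s := by
    intro s
    rcases le_or_gt 0 s with hs | hs
    · have hmono : MonotoneOn f (Set.Ici 0) := by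
        apply monotoneOn_of_deriv_nonneg (convex_Ici 0) hfdiff.continuous.continuousOn
          (fun x _ => (hfdiff x).differentiableWithinAt)
        intro x hx
        rw [interior_Ici] at hx
        rw [(hfderiv x).deriv]
        have := hgmono (le_of_lt hx)
        rw [hg0] at this
        exact this
      have := hmono (Set.self_mem_Ici) (Set.mem_Ici.mpr hs) hs
      rwa [hf0] at this
    · have hanti : AntitoneOn f (Set.Iic 0) := by
        apply antitoneOn_of_deriv_nonpos (convex_Iic 0) hfdiff.continuous.continuousOn
          (fun x _ => (hfdiff x).differentiableWithinAt)
        intro x hx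
        rw [interior_Iic] at hx
        rw [(hfderiv x).deriv]
        have := hgmono (le_of_lt hx)
        rw [hg0] at this
        exact this
      have := hanti (Set.mem_Iic.mpr hs.le) (Set.self_mem_Iic) hs.le
      rwa [hf0] at this
  have := hft t
  have hlog : Real.log (D t) ≤ p * t + t ^ 2 / 8 := by
    simp only [hfdef] at this; linarith
  have := (Real.log_le_iff_le_exp (hD t)).mp hlog
  simpa [hDdef] using this

section ProbAux

variable {Ω : Type*} [MeasurableSpace Ω] {μ : Measure Ω} [IsProbabilityMeasure μ]

lemma aux_exp_indicator_eq {A : Set Ω} (t : ℝ) (ω : Ω) :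
    Real.exp (t * A.indicator (fun _ => (1:ℝ)) ω) =
      A.indicator (fun _ => Real.exp t) ω + Aᶜ.indicator (fun _ => (1:ℝ)) ω := by
  by_cases h : ω ∈ A <;> simp [h, Set.indicator_of_mem, Set.indicator_of_notMem]

lemma aux_integrable_exp_indicator {A : Set Ω} (hA : MeasurableSet A) (t : ℝ) :
    Integrable (fun ω => Real.exp (t * A.indicator (fun _ => (1:ℝ)) ω)) μ := by
  have : (fun ω => Real.exp (t * A.indicator (fun _ => (1:ℝ)) ω)) =
      fun ω => A.indicator (fun _ => Real.exp t) ω + Aᶜ.indicator (fun _ => (1:ℝ)) ω := by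
    funext ω; exact aux_exp_indicator_eq t ω
  rw [this]
  exact ((integrable_const _).indicator hA).add ((integrable_const _).indicator hA.compl)

lemma aux_prob_compl_toReal {A : Set Ω} (hA : MeasurableSet A) :
    (μ Aᶜ).toReal = 1 - (μ A).toReal := by
  have h1 : (μ A).toReal + (μ Aᶜ).toReal = 1 := by
    rw [← ENNReal.toReal_add (measure_ne_top _ _) (measure_ne_top _ _),
      measure_add_measure_compl hA, measure_univ, ENNReal.toReal_one]
  linarith

lemma aux_mgf_indicator {A : Set Ω} (hA : MeasurableSet A) (t : ℝ) :
    mgf (A.indicator fun _ => (1:ℝ)) μ t =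
      1 - (μ A).toReal + (μ A).toReal * Real.exp t := by
  unfold mgf
  have : ∀ ω, Real.exp (t * A.indicator (fun _ => (1:ℝ)) ω) =
      A.indicator (fun _ => Real.exp t) ω + Aᶜ.indicator (fun _ => (1:ℝ)) ω :=
    aux_exp_indicator_eq t
  rw [integral_congr_ae (Filter.Eventually.of_forall this),
    integral_add ((integrable_const _).indicator hA) ((integrable_const _).indicator hA.compl),
    integral_indicator_const _ hA, integral_indicator_const _ hA.compl, measureReal_def, measureReal_def,
    aux_prob_compl_toReal hA]
  simp [mul_comm]
  ring

/-- Hoeffding-type bound for a single object: if strictly fewer than `Γ·N` of the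
pairs are "near" (satisfy `P`) and every far pair's event has probability at most
`β/2`, then the probability that at least `(Γ + β/2)·N` of the independent events
occur is at most `exp (-β²Γ²N/2)`. -/
lemma aux_per_object {ι : Type*} [Fintype ι] (A : ι → Set Ω)
    (hmeas : ∀ i, MeasurableSet (A i)) (hindep : iIndepSet A μ)
    (P : ι → Prop) [DecidablePred P]
    (β Γ : ℝ) (hβ0 : 0 < β) (hβ1 : β ≤ 1) (hΓ0 : 0 < Γ)
    (hfar : ∀ i, ¬ P i → (μ (A i)).toReal ≤ β / 2)
    (hnear : ((Finset.univ.filter P).card : ℝ) < Γ * (Fintype.card ι)) :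
    (μ {ω | (Γ + β / 2) * (Fintype.card ι) ≤
        (∑ i, (A i).indicator (fun _ => (1:ℝ))) ω}).toReal ≤
      Real.exp (-(β ^ 2 * Γ ^ 2 * (Fintype.card ι) / 2)) := by
  classical
  set Y : ι → Ω → ℝ := fun i => (A i).indicator (fun _ => (1:ℝ)) with hYdef
  set N : ℝ := (Fintype.card ι : ℝ) with hNdef
  set t : ℝ := 2 * β * Γ with htdef
  have ht : 0 ≤ t := by positivity
  set ε : ℝ := (Γ + β / 2) * N with hεdef
  have hIf : iIndepFun Y μ :=
    hindep.iIndepFun_indicator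
  have hYmeas : ∀ i, Measurable (Y i) := fun i => measurable_const.indicator (hmeas i)
  have h_int : ∀ i, Integrable (fun ω => Real.exp (t * Y i ω)) μ :=
    fun i => aux_integrable_exp_indicator (hmeas i) t
  have h_int_sum : Integrable (fun ω => Real.exp (t * (∑ i, Y i) ω)) μ :=
    hIf.integrable_exp_mul_sum hYmeas (fun i _ => h_int i)
  have chernoff := measure_ge_le_exp_mul_mgf (X := ∑ i, Y i) (μ := μ) ε ht h_int_sum
  have hmgf_sum : mgf (∑ i, Y i) μ t = ∏ i, mgf (Y i) μ t := hIf.mgf_sum hYmeas Finset.univ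
  set p : ι → ℝ := fun i => (μ (A i)).toReal with hpdef
  have hp0 : ∀ i, 0 ≤ p i := fun i => ENNReal.toReal_nonneg
  have hp1 : ∀ i, p i ≤ 1 := fun i => by
    simpa using ENNReal.toReal_mono ENNReal.one_ne_top (prob_le_one (μ := μ) (s := A i))
  have hmgf_le : ∀ i, mgf (Y i) μ t ≤ Real.exp (p i * t + t ^ 2 / 8) := fun i => by
    rw [hYdef, aux_mgf_indicator (hmeas i)]
    exact aux_bernoulli_mgf_le (hp0 i) (hp1 i) t
  have hprod : ∏ i, mgf (Y i) μ t ≤ Real.exp (t * (∑ i, p i) + N * t ^ 2 / 8) := by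
    calc ∏ i, mgf (Y i) μ t ≤ ∏ i, Real.exp (p i * t + t ^ 2 / 8) :=
          Finset.prod_le_prod (fun i _ => mgf_nonneg) (fun i _ => hmgf_le i)
      _ = Real.exp (∑ i, (p i * t + t ^ 2 / 8)) := by rw [Real.exp_sum]
      _ = Real.exp (t * (∑ i, p i) + N * t ^ 2 / 8) := by
          rw [Finset.sum_add_distrib, Finset.sum_const, ← Finset.sum_mul]
          simp [hNdef, mul_comm]
          ring_nf
  -- bound on sum of p
  have hsum_p : (∑ i, p i) ≤ ((Finset.univ.filter P).card : ℝ)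
      + (β / 2) * (N - ((Finset.univ.filter P).card : ℝ)) := by
    have hsplit : (∑ i, p i) = (∑ i ∈ Finset.univ.filter P, p i)
        + (∑ i ∈ Finset.univ.filter (fun i => ¬ P i), p i) :=
      (Finset.sum_filter_add_sum_filter_not Finset.univ P p).symm
    have h1 : (∑ i ∈ Finset.univ.filter P, p i) ≤ ((Finset.univ.filter P).card : ℝ) := by
      calc (∑ i ∈ Finset.univ.filter P, p i) ≤ ∑ _i ∈ Finset.univ.filter P, (1:ℝ) :=
            Finset.sum_le_sum (fun i _ => hp1 i)
        _ = ((Finset.univ.filter P).card : ℝ) := by simp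
    have h2 : (∑ i ∈ Finset.univ.filter (fun i => ¬ P i), p i) ≤
        (β / 2) * (N - ((Finset.univ.filter P).card : ℝ)) := by
      have hcard : ((Finset.univ.filter (fun i => ¬ P i)).card : ℝ)
          = N - ((Finset.univ.filter P).card : ℝ) := by
        have h5 := Finset.card_filter_add_card_filter_not (s := (Finset.univ : Finset ι)) (p := P)
        have h6 : Fintype.card ι = (Finset.univ.filter P).card
            + (Finset.univ.filter (fun a => ¬ P a)).card := by
          rw [h5, Finset.card_univ]
        simp only [hNdef, h6]
        push_cast
        ring
      calc (∑ i ∈ Finset.univ.filter (fun i => ¬ P i), p i)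
          ≤ ∑ _i ∈ Finset.univ.filter (fun i => ¬ P i), (β / 2) :=
            Finset.sum_le_sum (fun i hi => hfar i (by simpa using (Finset.mem_filter.mp hi).2))
        _ = ((Finset.univ.filter (fun i => ¬ P i)).card : ℝ) * (β / 2) := by
            simp [mul_comm]
        _ = (β / 2) * (N - ((Finset.univ.filter P).card : ℝ)) := by rw [hcard]; ring
    rw [hsplit]
    exact add_le_add h1 h2
  calc (μ {ω | ε ≤ (∑ i, Y i) ω}).toReal
      ≤ Real.exp (-t * ε) * mgf (∑ i, Y i) μ t := chernoff
    _ ≤ Real.exp (-t * ε) * Real.exp (t * (∑ i, p i) + N * t ^ 2 / 8) := by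
        rw [hmgf_sum]; exact mul_le_mul_of_nonneg_left hprod (Real.exp_nonneg _)
    _ = Real.exp (-t * ε + (t * (∑ i, p i) + N * t ^ 2 / 8)) := (Real.exp_add _ _).symm
    _ ≤ Real.exp (-(β ^ 2 * Γ ^ 2 * N / 2)) := by
        apply Real.exp_le_exp.mpr
        set K : ℝ := ((Finset.univ.filter P).card : ℝ) with hK
        have hKN : K < Γ * N := hnear
        have hsum := hsum_p
        have h3 : 0 ≤ 2 * β * Γ * (1 - β / 2) * (Γ * N - K) := by
          have : 0 ≤ 1 - β / 2 := by linarith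
          have h4 : 0 ≤ Γ * N - K := by linarith
          positivity
        have hts : t * (∑ i, p i) ≤ t * (K + (β / 2) * (N - K)) :=
          mul_le_mul_of_nonneg_left hsum ht
        simp only [htdef, hεdef] at hts ⊢
        nlinarith [hts, h3]

end ProbAux

/-- `sim` expressed as a ratio of `Finset` cards. -/
lemma aux_sim_eq {d : ℕ} (Q X : Finset (EuclideanSpace ℝ (Fin d))) (R : ℝ) :
    sim Q X R = ((((Q ×ˢ X)).filter fun p => dist p.1 p.2 ≤ R).card : ℝ)
      / ((Q.card : ℝ) * (X.card : ℝ)) := by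
  classical
  unfold sim
  congr 1
  rw [show {p : EuclideanSpace ℝ (Fin d) × EuclideanSpace ℝ (Fin d) |
      p.1 ∈ Q ∧ p.2 ∈ X ∧ dist p.1 p.2 ≤ R}
      = ↑((Q ×ˢ X).filter fun p => dist p.1 p.2 ≤ R) by
    ext p
    simp [Finset.mem_product, and_assoc]]
  rw [Set.ncard_coe_finset]

lemma aux_sim_lt {d : ℕ} (Q X : Finset (EuclideanSpace ℝ (Fin d))) (Γ r : ℝ)
    (hr : 0 ≤ r) (h : r < gammaDist Q X Γ) : sim Q X r < Γ := by
  by_contra h'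
  push_neg at h'
  have : gammaDist Q X Γ ≤ r :=
    csInf_le ⟨0, fun y hy => hy.1⟩ ⟨hr, h'⟩
  linarith

set_option maxHeartbeats 1000000 in
/-- Part P2 of the paper's Lemma 1: with probability at least 1/2 there are at most
`β·S` Γ-false positives among the `S` dataset objects. -/
theorem stmt_9 {d : ℕ} {Ω : Type*} [MeasurableSpace Ω] (μ : Measure Ω)
    [IsProbabilityMeasure μ]
    (Q : Finset (EuclideanSpace ℝ (Fin d))) (hQ : Q.Nonempty)
    (S : ℕ) (hS : 1 ≤ S)
    (Xs : Fin S → Finset (EuclideanSpace ℝ (Fin d))) (hXs : ∀ j, (Xs j).Nonempty)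
    (L : ℕ) (hLle : ∀ j, L ≤ (Xs j).card) (hLmem : ∃ j, (Xs j).card = L)
    (β Γ c : ℝ) (hβpos : 0 < β) (hβ1 : β ≤ 1) (hΓpos : 0 < Γ) (hΓ1 : Γ ≤ 1) (hc : 1 ≤ c)
    (hΓ : Γ ≥ Real.sqrt (2 * Real.log (2 / β) / (β ^ 2 * (Q.card * L : ℕ))))
    (R : ℝ) (hR : 0 ≤ R)
    (A : (j : Fin S) → (Q ×ˢ Xs j : Finset _) → Set Ω)
    (hAmeas : ∀ j p, MeasurableSet (A j p))
    (hindep : ∀ j, iIndepSet (A j) μ)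
    (hPA : ∀ j, ∀ p : (Q ×ˢ Xs j : Finset _), c * R < dist p.1.1 p.1.2 →
      (μ (A j p)).toReal ≤ β / 2) :
    (1 : ℝ) / 2 ≤
      (μ {ω | (Set.ncard {j : Fin S | c * R < gammaDist Q (Xs j) Γ ∧
          (Γ + β / 2) * ((Q.card * (Xs j).card : ℕ) : ℝ) ≤
            (Set.ncard {p : (Q ×ˢ Xs j : Finset _) | ω ∈ A j p} : ℝ)} : ℝ) ≤
        β * S}).toReal := by
  classical
  have hQc : (0:ℝ) < Q.card := by exact_mod_cast hQ.card_pos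
  have hL1 : 1 ≤ L := by
    obtain ⟨j0, hj0⟩ := hLmem
    have := (hXs j0).card_pos
    omega
  have hcR : 0 ≤ c * R := mul_nonneg (by linarith) hR
  -- the count functions
  set f : (j : Fin S) → Ω → ℝ :=
    fun j => ∑ i : (Q ×ˢ Xs j : Finset _), (A j i).indicator (fun _ => (1:ℝ)) with hfdef
  have hfapply : ∀ j ω, f j ω = ∑ i : (Q ×ˢ Xs j : Finset _),
      (A j i).indicator (fun _ => (1:ℝ)) ω := by
    intro j ω
    rw [hfdef]
    simp [Finset.sum_apply]
  have hfmeas : ∀ j, Measurable (f j) := by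
    intro j
    have : f j = fun ω => ∑ i : (Q ×ˢ Xs j : Finset _),
        (A j i).indicator (fun _ => (1:ℝ)) ω := by
      funext ω; exact hfapply j ω
    rw [this]
    exact Finset.measurable_sum _ (fun i _ => measurable_const.indicator (hAmeas j i))
  have hcount : ∀ j ω,
      (Set.ncard {p : (Q ×ˢ Xs j : Finset _) | ω ∈ A j p} : ℝ) = f j ω := by
    intro j ω
    have h1 : {p : (Q ×ˢ Xs j : Finset _) | ω ∈ A j p}
        = ↑(Finset.univ.filter fun p : (Q ×ˢ Xs j : Finset _) => ω ∈ A j p) := by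
      ext p; simp
    rw [h1, Set.ncard_coe_finset, Finset.card_filter, hfapply j ω]
    push_cast
    apply Finset.sum_congr rfl
    intro i _
    by_cases h : ω ∈ A j i <;> simp [h]
  -- the per-object bad events
  set thr : Fin S → ℝ := fun j => (Γ + β / 2) * ((Q.card * (Xs j).card : ℕ) : ℝ) with hthr
  set B : Fin S → Set Ω := fun j => {ω | thr j ≤ f j ω} with hBdef
  have hBmeas : ∀ j, MeasurableSet (B j) := fun j =>
    measurableSet_le measurable_const (hfmeas j)
  -- cardinality of the index type for object j
  have hcard_ι : ∀ j : Fin S,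
      Fintype.card ((Q ×ˢ Xs j : Finset _) : Type _) = Q.card * (Xs j).card := by
    intro j
    rw [Fintype.card_coe, Finset.card_product]
  -- the key per-object bound
  have hkey : ∀ j : Fin S, c * R < gammaDist Q (Xs j) Γ → (μ (B j)).toReal ≤ β / 2 := by
    intro j hj
    have hXc : (0:ℝ) < (Xs j).card := by exact_mod_cast (hXs j).card_pos
    have hsim := aux_sim_lt Q (Xs j) Γ (c * R) hcR hj
    rw [aux_sim_eq] at hsim
    have hnear_prod : ((((Q ×ˢ Xs j)).filter fun p => dist p.1 p.2 ≤ c * R).card : ℝ)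
        < Γ * ((Q.card : ℝ) * ((Xs j).card : ℝ)) := by
      rw [div_lt_iff₀ (by positivity)] at hsim
      linarith [hsim]
    have hnear : ((Finset.univ.filter
          (fun i : (Q ×ˢ Xs j : Finset _) => dist i.1.1 i.1.2 ≤ c * R)).card : ℝ)
        < Γ * (Fintype.card ((Q ×ˢ Xs j : Finset _) : Type _)) := by
      have hc1 : (Finset.univ.filter
            (fun i : (Q ×ˢ Xs j : Finset _) => dist i.1.1 i.1.2 ≤ c * R)).card
          = (((Q ×ˢ Xs j)).filter fun p => dist p.1 p.2 ≤ c * R).card := by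
        rw [Finset.univ_eq_attach]
        refine Finset.card_bij (fun a _ => a.1) ?_ ?_ ?_
        · intro a ha
          simp only [Finset.mem_filter] at ha ⊢
          exact ⟨a.2, ha.2⟩
        · intro a _ b _ h
          exact Subtype.ext h
        · intro b hb
          simp only [Finset.mem_filter] at hb
          exact ⟨⟨b, hb.1⟩, by simp [hb.2], rfl⟩
      rw [hc1, hcard_ι j]
      push_cast
      exact hnear_prod
    have hfar : ∀ i : (Q ×ˢ Xs j : Finset _),
        ¬ (dist i.1.1 i.1.2 ≤ c * R) → (μ (A j i)).toReal ≤ β / 2 :=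
      fun i hi => hPA j i (not_le.mp hi)
    have hper := aux_per_object (μ := μ) (A j) (hAmeas j) (hindep j)
      (fun i : (Q ×ˢ Xs j : Finset _) => dist i.1.1 i.1.2 ≤ c * R)
      β Γ hβpos hβ1 hΓpos hfar hnear
    have hBeq : B j = {ω | (Γ + β / 2) * (Fintype.card ((Q ×ˢ Xs j : Finset _) : Type _)) ≤
        (∑ i : (Q ×ˢ Xs j : Finset _), (A j i).indicator (fun _ => (1:ℝ))) ω} := by
      rw [hBdef]
      simp only [hthr, hcard_ι j, hfdef]
    rw [hBeq]
    refine le_trans hper ?_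
    -- exp (-β²Γ²N/2) ≤ exp (-β²Γ² |Q| L / 2) ≤ β/2
    have hQL : (0:ℝ) < ((Q.card * L : ℕ) : ℝ) := by
      have : 0 < Q.card * L := Nat.mul_pos hQ.card_pos (by omega)
      exact_mod_cast this
    have hmono : ((Q.card * L : ℕ) : ℝ)
        ≤ (Fintype.card ((Q ×ˢ Xs j : Finset _) : Type _) : ℝ) := by
      rw [hcard_ι j]
      exact_mod_cast Nat.mul_le_mul_left _ (hLle j)
    have h6 : Real.exp (-(β ^ 2 * Γ ^ 2 *
          (Fintype.card ((Q ×ˢ Xs j : Finset _) : Type _)) / 2))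
        ≤ Real.exp (-(β ^ 2 * Γ ^ 2 * ((Q.card * L : ℕ) : ℝ) / 2)) := by
      apply Real.exp_le_exp.mpr
      nlinarith [mul_nonneg (sq_nonneg β) (sq_nonneg Γ), hmono]
    refine le_trans h6 ?_
    have hlog : 0 ≤ Real.log (2 / β) :=
      Real.log_nonneg (by rw [le_div_iff₀ hβpos]; linarith)
    have hden : (0:ℝ) < β ^ 2 * ((Q.card * L : ℕ) : ℝ) := by positivity
    have ha : 0 ≤ 2 * Real.log (2 / β) / (β ^ 2 * ((Q.card * L : ℕ) : ℝ)) :=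
      div_nonneg (by linarith) hden.le
    have hsq : 2 * Real.log (2 / β) / (β ^ 2 * ((Q.card * L : ℕ) : ℝ)) ≤ Γ ^ 2 := by
      have h7 : Real.sqrt (2 * Real.log (2 / β) / (β ^ 2 * ((Q.card * L : ℕ) : ℝ))) ^ 2
          ≤ Γ ^ 2 := pow_le_pow_left₀ (Real.sqrt_nonneg _) hΓ 2
      rwa [Real.sq_sqrt ha] at h7
    have h8 : Real.log (2 / β) ≤ β ^ 2 * Γ ^ 2 * ((Q.card * L : ℕ) : ℝ) / 2 := by
      rw [div_le_iff₀ hden] at hsq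
      nlinarith [hsq]
    calc Real.exp (-(β ^ 2 * Γ ^ 2 * ((Q.card * L : ℕ) : ℝ) / 2))
        ≤ Real.exp (-(Real.log (2 / β))) := Real.exp_le_exp.mpr (by linarith)
      _ = β / 2 := by
          rw [Real.exp_neg, Real.exp_log (by positivity), inv_div]
  -- the false-positive count as a sum of indicators
  set Far : Finset (Fin S) := Finset.univ.filter
    (fun j => c * R < gammaDist Q (Xs j) Γ) with hFarDef
  set g : Ω → ℝ := fun ω => ∑ j ∈ Far, (B j).indicator (fun _ => (1:ℝ)) ω with hgdef
  have hgcount : ∀ ω, (Set.ncard {j : Fin S | c * R < gammaDist Q (Xs j) Γ ∧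
      (Γ + β / 2) * ((Q.card * (Xs j).card : ℕ) : ℝ) ≤
        (Set.ncard {p : (Q ×ˢ Xs j : Finset _) | ω ∈ A j p} : ℝ)} : ℝ) = g ω := by
    intro ω
    have h1 : {j : Fin S | c * R < gammaDist Q (Xs j) Γ ∧
        (Γ + β / 2) * ((Q.card * (Xs j).card : ℕ) : ℝ) ≤
          (Set.ncard {p : (Q ×ˢ Xs j : Finset _) | ω ∈ A j p} : ℝ)}
        = ↑(Far.filter (fun j => ω ∈ B j)) := by
      ext j
      simp only [Set.mem_setOf_eq, Finset.coe_filter, hFarDef, Finset.mem_filter,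
        Finset.mem_univ, true_and, hBdef, Set.mem_setOf_eq, hthr]
      rw [hcount j ω]
    rw [h1, Set.ncard_coe_finset, Finset.card_filter, hgdef]
    push_cast
    apply Finset.sum_congr rfl
    intro j _
    by_cases h : ω ∈ B j <;> simp [h]
  -- expectation bound and Markov
  have hg_nonneg : ∀ ω, 0 ≤ g ω := fun ω =>
    Finset.sum_nonneg fun j _ => Set.indicator_nonneg (fun _ _ => zero_le_one) ω
  have hg_int : Integrable g μ := by
    rw [hgdef]
    exact integrable_finset_sum Far (fun j _ => (integrable_const (1:ℝ)).indicator (hBmeas j))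
  have hg_meas : Measurable g := by
    rw [hgdef]
    exact Finset.measurable_sum _ (fun j _ => measurable_const.indicator (hBmeas j))
  have hS1 : (1:ℝ) ≤ S := by exact_mod_cast hS
  have hEg : ∫ ω, g ω ∂μ ≤ β / 2 * S := by
    rw [hgdef]
    rw [integral_finset_sum Far (fun j _ => (integrable_const (1:ℝ)).indicator (hBmeas j))]
    have h2 : ∀ j ∈ Far, ∫ ω, (B j).indicator (fun _ => (1:ℝ)) ω ∂μ ≤ β / 2 := by
      intro j hjF
      rw [integral_indicator_const _ (hBmeas j), smul_eq_mul, mul_one]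
      exact hkey j (by simpa [hFarDef] using hjF)
    calc (∑ j ∈ Far, ∫ ω, (B j).indicator (fun _ => (1:ℝ)) ω ∂μ)
        ≤ ∑ _j ∈ Far, (β / 2) := Finset.sum_le_sum h2
      _ = (Far.card : ℝ) * (β / 2) := by simp [mul_comm]
      _ ≤ (S : ℝ) * (β / 2) := by
          have : (Far.card : ℝ) ≤ (S : ℝ) := by
            have := Finset.card_le_univ Far
            simp only [Finset.card_univ, Fintype.card_fin] at this
            exact_mod_cast this
          nlinarith [this]
      _ = β / 2 * S := by ring
  have hβS : (0:ℝ) < β * S := mul_pos hβpos (by linarith)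
  have markov := mul_meas_ge_le_integral_of_nonneg
    (Filter.Eventually.of_forall hg_nonneg) hg_int (β * S)
  have h8 : (μ {ω | β * S ≤ g ω}).toReal ≤ 1 / 2 := by
    have h81 := markov.trans hEg
    have hhalf : (1:ℝ) / 2 = (β / 2 * S) / (β * S) := by
      rw [div_eq_div_iff (by norm_num) hβS.ne']
      ring
    rw [hhalf, le_div_iff₀ hβS]
    rw [measureReal_def] at h81
    linarith [h81]
  -- wrap up with the complement
  have hTset : {ω : Ω | (Set.ncard {j : Fin S | c * R < gammaDist Q (Xs j) Γ ∧
      (Γ + β / 2) * ((Q.card * (Xs j).card : ℕ) : ℝ) ≤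
        (Set.ncard {p : (Q ×ˢ Xs j : Finset _) | ω ∈ A j p} : ℝ)} : ℝ) ≤ β * S}
      = {ω | g ω ≤ β * S} := by
    ext ω
    simp only [Set.mem_setOf_eq]
    rw [hgcount ω]
  rw [hTset]
  have hTmeas : MeasurableSet {ω | g ω ≤ β * (S:ℝ)} :=
    measurableSet_le hg_meas measurable_const
  have hsub : {ω | g ω ≤ β * (S:ℝ)}ᶜ ⊆ {ω | β * S ≤ g ω} := by
    intro ω hω
    simp only [Set.mem_compl_iff, Set.mem_setOf_eq, not_le] at hω
    exact le_of_lt hω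
  have h9 : (μ ({ω | g ω ≤ β * (S:ℝ)}ᶜ)).toReal ≤ 1 / 2 :=
    le_trans (ENNReal.toReal_mono (measure_ne_top _ _) (measure_mono hsub)) h8
  have h10 := aux_prob_compl_toReal (μ := μ) hTmeas
  linarith
end
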